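/- arXiv:2405.00148 — 6 statements merged into one kernel-verified Lean document; each statement's English description precedes it below -/
import Mathlib

section
/- Assume that every matrix E_{i,t} has full column rank. Then for every feasible pair ((Ψ_i)_i,(X_i)_i) of the local problem P_L there exists a feasible pair ((ψ_i)_i,(X_i)_i) of the state-feedback local problem P_L^x, with the same state-forecast sets X_i, whose closed-loop state-input trajectories coincide with those of ((Ψ_i)_i,(X_i)_i) for every ξ_i ∈ Ξ_i and ζ_{N_i} ∈ X_{N_i}, so that the two pairs achieve the same objective value; consequently val(P_L^x) = val(P_L). -/
open scoped BigOperators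

/-- The `q`-norm used in the cost: `q = 1` (when `qOne = true`) gives the sum of absolute
values, `q = ∞` (when `qOne = false`) gives the sup norm. -/
noncomputable def normQ (qOne : Bool) {n : ℕ} (v : Fin n → ℝ) : ℝ :=
  if qOne then ∑ k, |v k| else ‖v‖

/-- The data of a network of `M` interconnected linear systems over `T` stages:
dynamics matrices, operational constraints, costs, polyhedral uncertainty sets (nonempty and
compact), the neighbour sets `Nbr` and the precedent sets `Nbar` (characterized as the
smallest family containing each agent and nested along the neighbour relation). -/
structure Sys where
  M : ℕ
  T : ℕ
  hM : 1 ≤ M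
  hT : 1 ≤ T
  nx : Fin M → ℕ
  nu : Fin M → ℕ
  nξ : Fin M → ℕ
  xinit : ∀ i : Fin M, Fin (nx i) → ℝ
  Nbr : Fin M → Finset (Fin M)
  Nbar : Fin M → Finset (Fin M)
  Nbar_self : ∀ i, i ∈ Nbar i
  Nbar_nested : ∀ i, ∀ j ∈ Nbr i, Nbar j ⊆ Nbar i
  Nbar_min : ∀ P : Fin M → Finset (Fin M),
    (∀ i, i ∈ P i) → (∀ i, ∀ j ∈ Nbr i, P j ⊆ P i) → ∀ i, Nbar i ⊆ P i
  A : ∀ i : Fin M, Fin T → Matrix (Fin (nx i)) (Fin (nx i)) ℝ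
  B : ∀ i : Fin M, Fin T → ∀ j : Fin M, Matrix (Fin (nx i)) (Fin (nx j)) ℝ
  D : ∀ i : Fin M, Fin T → Matrix (Fin (nx i)) (Fin (nu i)) ℝ
  E : ∀ i : Fin M, Fin T → Matrix (Fin (nx i)) (Fin (nξ i)) ℝ
  nc : Fin M → ℕ
  Hx : ∀ i : Fin M, Matrix (Fin (nc i)) (Fin (T+1) × Fin (nx i)) ℝ
  Hu : ∀ i : Fin M, Matrix (Fin (nc i)) (Fin T × Fin (nu i)) ℝ
  hvec : ∀ i : Fin M, Fin (nc i) → ℝ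
  qOne : Bool
  nq : Fin M → ℕ
  nr : Fin M → ℕ
  Q : ∀ i : Fin M, Matrix (Fin (nq i)) (Fin (nx i)) ℝ
  R : ∀ i : Fin M, Matrix (Fin (nr i)) (Fin (nu i)) ℝ
  nW : Fin M → ℕ
  W : ∀ i : Fin M, Matrix (Fin (nW i)) (Fin T × Fin (nξ i)) ℝ
  wvec : ∀ i : Fin M, Fin (nW i) → ℝ
  Xi_nonempty : ∀ i : Fin M,
    {ξ : Fin T → Fin (nξ i) → ℝ |
      ∀ r, wvec i r ≤ ∑ p : Fin T × Fin (nξ i), W i r p * ξ p.1 p.2}.Nonempty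
  Xi_compact : ∀ i : Fin M,
    IsCompact {ξ : Fin T → Fin (nξ i) → ℝ |
      ∀ r, wvec i r ≤ ∑ p : Fin T × Fin (nξ i), W i r p * ξ p.1 p.2}

namespace Sys

variable (S : Sys)

/-- State trajectories of agent `i` (stages `1, …, T+1`, zero-indexed). -/
abbrev StateTraj (i : Fin S.M) := Fin (S.T+1) → Fin (S.nx i) → ℝ

/-- Input trajectories of agent `i`. -/
abbrev InputTraj (i : Fin S.M) := Fin S.T → Fin (S.nu i) → ℝ

/-- Uncertainty trajectories of agent `i`. -/
abbrev NoiseTraj (i : Fin S.M) := Fin S.T → Fin (S.nξ i) → ℝ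

/-- Families of (belief) state trajectories, one for each agent. -/
abbrev Beliefs := ∀ j : Fin S.M, Fin (S.T+1) → Fin (S.nx j) → ℝ

/-- Joint uncertainty trajectories. -/
abbrev NoiseAll := ∀ j : Fin S.M, S.NoiseTraj j

/-- The polyhedral uncertainty set `Ξ_i = {ξ : W_i ξ ≥ w_i}`. -/
def Xi (i : Fin S.M) : Set (S.NoiseTraj i) :=
  {ξ | ∀ r, S.wvec i r ≤ ∑ p : Fin S.T × Fin (S.nξ i), S.W i r p * ξ p.1 p.2}

/-- The joint uncertainty set `Ξ_M = ∏_i Ξ_i`. -/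
def XiM : Set S.NoiseAll := {ξ | ∀ j, ξ j ∈ S.Xi j}

/-- The operational constraint set `O_i`: `H_{x,i} x_i + H_{u,i} u_i ≤ h_i`. -/
def InO (i : Fin S.M) (x : S.StateTraj i) (u : S.InputTraj i) : Prop :=
  ∀ r, (∑ p : Fin (S.T+1) × Fin (S.nx i), S.Hx i r p * x p.1 p.2)
      + (∑ p : Fin S.T × Fin (S.nu i), S.Hu i r p * u p.1 p.2) ≤ S.hvec i r

/-- The cost `J_i(x_i, u_i) = ∑_{t=1}^T (‖Q_i x_{i,t}‖_q + ‖R_i u_{i,t}‖_q)`. -/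
noncomputable def cost (i : Fin S.M) (x : S.StateTraj i) (u : S.InputTraj i) : ℝ :=
  ∑ t : Fin S.T,
    (normQ S.qOne ((S.Q i).mulVec (x t.castSucc)) + normQ S.qOne ((S.R i).mulVec (u t)))

/-- Closed-loop joint dynamics: state of each agent at (zero-based) time `t`,
given inputs `u` and uncertainties `ξ`. -/
noncomputable def jointAux (u : ∀ i : Fin S.M, S.InputTraj i) (ξ : S.NoiseAll) :
    ℕ → ∀ i : Fin S.M, Fin (S.nx i) → ℝ
  | 0 => fun i => S.xinit i
  | (t+1) => fun i =>
      if h : t < S.T then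
        (S.A i ⟨t, h⟩).mulVec (jointAux u ξ t i)
        + ∑ j ∈ S.Nbr i, (S.B i ⟨t, h⟩ j).mulVec (jointAux u ξ t j)
        + (S.D i ⟨t, h⟩).mulVec (u i ⟨t, h⟩)
        + (S.E i ⟨t, h⟩).mulVec (ξ i ⟨t, h⟩)
      else 0

/-- Policies with access to the full uncertainty history (centralized /
partially nested information, depending on the causality requirement imposed). -/
abbrev CPolicy := ∀ i : Fin S.M, Fin S.T → S.NoiseAll → Fin (S.nu i) → ℝ

/-- Closed-loop inputs of a centralized/partially nested policy. -/
noncomputable def clInput (Φ : S.CPolicy) (ξ : S.NoiseAll) (i : Fin S.M) : S.InputTraj i :=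
  fun t => Φ i t ξ

/-- Closed-loop state trajectories of a centralized/partially nested policy. -/
noncomputable def clState (Φ : S.CPolicy) (ξ : S.NoiseAll) (i : Fin S.M) : S.StateTraj i :=
  fun τ => S.jointAux (fun i' t => Φ i' t ξ) ξ τ.val i

/-- Strict causality: `Φ_{i,t}` is a function of `ξ_M^{t-1}` only. -/
def CCausal (Φ : S.CPolicy) : Prop :=
  ∀ i (t : Fin S.T) (ξ ξ' : S.NoiseAll),
    (∀ j : Fin S.M, ∀ τ : Fin S.T, (τ : ℕ) < (t : ℕ) → ξ j τ = ξ' j τ) →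
    Φ i t ξ = Φ i t ξ'

/-- Partially nested causality: `Φ_{i,t}` is a function of `ξ_{N̄_i}^{t-1}` only. -/
def PNCausal (Φ : S.CPolicy) : Prop :=
  ∀ i (t : Fin S.T) (ξ ξ' : S.NoiseAll),
    (∀ j ∈ S.Nbar i, ∀ τ : Fin S.T, (τ : ℕ) < (t : ℕ) → ξ j τ = ξ' j τ) →
    Φ i t ξ = Φ i t ξ'

/-- Robust feasibility of the closed loop: operational constraints hold for every
`ξ_M ∈ Ξ_M`. -/
def feasRobust (Φ : S.CPolicy) : Prop :=
  ∀ ξ ∈ S.XiM, ∀ i, S.InO i (S.clState Φ ξ i) (S.clInput Φ ξ i)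

/-- Feasibility for the centralized problem `P_C`. -/
def feasC (Φ : S.CPolicy) : Prop := S.CCausal Φ ∧ S.feasRobust Φ

/-- Feasibility for the partially nested problem `P_PN`. -/
def feasPN (Φ : S.CPolicy) : Prop := S.PNCausal Φ ∧ S.feasRobust Φ

/-- Objective of `P_C`: `∑_i sup_{ξ_M ∈ Ξ_M} J_i`. -/
noncomputable def objC (Φ : S.CPolicy) : EReal :=
  ∑ i : Fin S.M,
    sSup ((fun ξ => ((S.cost i (S.clState Φ ξ i) (S.clInput Φ ξ i) : ℝ) : EReal)) '' S.XiM)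

/-- Objective of `P_PN`: `∑_i sup_{ξ_{N̄_i} ∈ Ξ_{N̄_i}} J_i`, the supremum over
`Ξ_{N̄_i}` being encoded by pinning the coordinates outside `N̄_i` to a fixed
selection `ξ0 ∈ Ξ_M`. -/
noncomputable def objPN (Φ : S.CPolicy) (ξ0 : S.NoiseAll) : EReal :=
  ∑ i : Fin S.M,
    sSup ((fun ξ => ((S.cost i (S.clState Φ ξ i) (S.clInput Φ ξ i) : ℝ) : EReal)) ''
      {ξ | ξ ∈ S.XiM ∧ ∀ j ∉ S.Nbar i, ξ j = ξ0 j})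

/-- Optimal value of the centralized problem `P_C`. -/
noncomputable def valC : EReal := sInf {v : EReal | ∃ Φ : S.CPolicy, S.feasC Φ ∧ v = S.objC Φ}

/-- Optimal value of the partially nested problem `P_PN`. -/
noncomputable def valPN (ξ0 : S.NoiseAll) : EReal :=
  sInf {v : EReal | ∃ Φ : S.CPolicy, S.feasPN Φ ∧ v = S.objPN Φ ξ0}

end Sys
namespace Sys

variable (S : Sys)

/-- Policies of the local information exchange problem: `Ψ_{i,t}` sees the own
uncertainty trajectory and the neighbours' belief trajectories. -/
abbrev LPolicy := ∀ i : Fin S.M, Fin S.T → S.NoiseTraj i → S.Beliefs → Fin (S.nu i) → ℝ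

/-- Causality for local policies: `Ψ_{i,t}` depends only on `ξ_i^{t-1}` and
`ζ_{N_i}^t`. -/
def LCausal (Ψ : S.LPolicy) : Prop :=
  ∀ i (t : Fin S.T) (ξ ξ' : S.NoiseTraj i) (ζ ζ' : S.Beliefs),
    (∀ τ : Fin S.T, (τ : ℕ) < (t : ℕ) → ξ τ = ξ' τ) →
    (∀ j ∈ S.Nbr i, ∀ τ : Fin (S.T+1), (τ : ℕ) ≤ (t : ℕ) → ζ j τ = ζ' j τ) →
    Ψ i t ξ ζ = Ψ i t ξ' ζ'

/-- The dynamics `f_i`: state of agent `i` at (zero-based) time `t`, driven by the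
neighbour (belief) trajectories `ζ`, inputs `u` and uncertainties `ξ`. -/
noncomputable def trajAux (i : Fin S.M) (ζ : S.Beliefs) (u : S.InputTraj i)
    (ξ : S.NoiseTraj i) : ℕ → Fin (S.nx i) → ℝ
  | 0 => S.xinit i
  | (t+1) =>
      if h : t < S.T then
        (S.A i ⟨t, h⟩).mulVec (trajAux i ζ u ξ t)
        + ∑ j ∈ S.Nbr i, (S.B i ⟨t, h⟩ j).mulVec (ζ j ⟨t, Nat.lt_succ_of_lt h⟩)
        + (S.D i ⟨t, h⟩).mulVec (u ⟨t, h⟩)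
        + (S.E i ⟨t, h⟩).mulVec (ξ ⟨t, h⟩)
      else 0

/-- The state trajectory `f_i(ζ_{N_i}, u_i, ξ_i)`. -/
noncomputable def traj (i : Fin S.M) (ζ : S.Beliefs) (u : S.InputTraj i)
    (ξ : S.NoiseTraj i) : S.StateTraj i := fun τ => S.trajAux i ζ u ξ τ.val

/-- Closed-loop inputs of a local policy. -/
noncomputable def lInput (Ψ : S.LPolicy) (i : Fin S.M) (ξ : S.NoiseTraj i) (ζ : S.Beliefs) :
    S.InputTraj i := fun t => Ψ i t ξ ζ

/-- Closed-loop state of a local policy. -/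
noncomputable def lState (Ψ : S.LPolicy) (i : Fin S.M) (ξ : S.NoiseTraj i) (ζ : S.Beliefs) :
    S.StateTraj i := S.traj i ζ (S.lInput Ψ i ξ ζ) ξ

/-- The belief constraint set `X_{N_i} = ∏_{j ∈ N_i} X_j` (coordinates outside `N_i`
are unconstrained; they are irrelevant by causality). -/
def BelSet (X : ∀ i : Fin S.M, Set (S.StateTraj i)) (i : Fin S.M) : Set S.Beliefs :=
  {ζ | ∀ j ∈ S.Nbr i, ζ j ∈ X j}

/-- Robust constraints of the local problem: for every belief in `X_{N_i}` and every
`ξ_i ∈ Ξ_i`, the operational constraints hold and the own state lies in `X_i`. -/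
def feasLcon (Ψ : S.LPolicy) (X : ∀ i : Fin S.M, Set (S.StateTraj i)) : Prop :=
  ∀ i, ∀ ζ ∈ S.BelSet X i, ∀ ξ ∈ S.Xi i,
    S.InO i (S.lState Ψ i ξ ζ) (S.lInput Ψ i ξ ζ) ∧ S.lState Ψ i ξ ζ ∈ X i

/-- Feasibility for the local problem `P_L`: causal policies, nonempty compact
state-forecast sets, and robust constraints. -/
def feasL (Ψ : S.LPolicy) (X : ∀ i : Fin S.M, Set (S.StateTraj i)) : Prop :=
  S.LCausal Ψ ∧ (∀ i, (X i).Nonempty ∧ IsCompact (X i)) ∧ S.feasLcon Ψ X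

/-- Objective of `P_L`: `∑_i sup_{ξ_i ∈ Ξ_i, ζ_{N_i} ∈ X_{N_i}} J_i`. -/
noncomputable def objL (Ψ : S.LPolicy) (X : ∀ i : Fin S.M, Set (S.StateTraj i)) : EReal :=
  ∑ i : Fin S.M,
    sSup ((fun p : S.NoiseTraj i × S.Beliefs =>
        ((S.cost i (S.lState Ψ i p.1 p.2) (S.lInput Ψ i p.1 p.2) : ℝ) : EReal)) ''
      {p | p.1 ∈ S.Xi i ∧ p.2 ∈ S.BelSet X i})

/-- Optimal value of the local problem `P_L`. -/
noncomputable def valL : EReal :=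
  sInf {v : EReal | ∃ (Ψ : S.LPolicy) (X : ∀ i : Fin S.M, Set (S.StateTraj i)),
    S.feasL Ψ X ∧ v = S.objL Ψ X}

end Sys
namespace Sys

variable (S : Sys)

/-- State-feedback local policies: `ψ_{i,t}` sees the own state history and the
neighbours' belief trajectories. -/
abbrev SFPolicy := ∀ i : Fin S.M, Fin S.T → S.StateTraj i → S.Beliefs → Fin (S.nu i) → ℝ

/-- Causality for state-feedback local policies: `ψ_{i,t}` depends only on `x_i^t`
and `ζ_{N_i}^t`. -/
def SFCausal (ψ : S.SFPolicy) : Prop :=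
  ∀ i (t : Fin S.T) (x x' : S.StateTraj i) (ζ ζ' : S.Beliefs),
    (∀ τ : Fin (S.T+1), (τ : ℕ) ≤ (t : ℕ) → x τ = x' τ) →
    (∀ j ∈ S.Nbr i, ∀ τ : Fin (S.T+1), (τ : ℕ) ≤ (t : ℕ) → ζ j τ = ζ' j τ) →
    ψ i t x ζ = ψ i t x' ζ'

/-- Closed loop of a state-feedback local policy: the state at (zero-based) time `t`,
defined recursively; the policy is fed the state history up to the current time
(padded with `0` afterwards). -/
noncomputable def sfAux (i : Fin S.M)
    (ψi : Fin S.T → S.StateTraj i → S.Beliefs → Fin (S.nu i) → ℝ)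
    (ξ : S.NoiseTraj i) (ζ : S.Beliefs) : ℕ → Fin (S.nx i) → ℝ
  | 0 => S.xinit i
  | (t+1) =>
      if h : t < S.T then
        (S.A i ⟨t, h⟩).mulVec (sfAux i ψi ξ ζ t)
        + ∑ j ∈ S.Nbr i, (S.B i ⟨t, h⟩ j).mulVec (ζ j ⟨t, Nat.lt_succ_of_lt h⟩)
        + (S.D i ⟨t, h⟩).mulVec (ψi ⟨t, h⟩
            (fun τ : Fin (S.T+1) =>
              if hτ : (τ : ℕ) ≤ t then sfAux i ψi ξ ζ τ.val else 0) ζ)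
        + (S.E i ⟨t, h⟩).mulVec (ξ ⟨t, h⟩)
      else 0
  termination_by t => t
  decreasing_by all_goals omega

/-- Closed-loop inputs of a state-feedback local policy:
`u_{i,t} = ψ_{i,t}(x_i^t, ζ_{N_i}^t)`. -/
noncomputable def sfInput (ψ : S.SFPolicy) (i : Fin S.M) (ξ : S.NoiseTraj i) (ζ : S.Beliefs) :
    S.InputTraj i :=
  fun t => ψ i t
    (fun τ : Fin (S.T+1) => if (τ : ℕ) ≤ (t : ℕ) then S.sfAux i (ψ i) ξ ζ τ.val else 0) ζ

/-- Closed-loop state of a state-feedback local policy. -/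
noncomputable def sfState (ψ : S.SFPolicy) (i : Fin S.M) (ξ : S.NoiseTraj i) (ζ : S.Beliefs) :
    S.StateTraj i := fun τ => S.sfAux i (ψ i) ξ ζ τ.val

/-- Feasibility for the state-feedback local problem `P_L^x`. -/
def feasLx (ψ : S.SFPolicy) (X : ∀ i : Fin S.M, Set (S.StateTraj i)) : Prop :=
  S.SFCausal ψ ∧ (∀ i, (X i).Nonempty ∧ IsCompact (X i)) ∧
  ∀ i, ∀ ζ ∈ S.BelSet X i, ∀ ξ ∈ S.Xi i,
    S.InO i (S.sfState ψ i ξ ζ) (S.sfInput ψ i ξ ζ) ∧ S.sfState ψ i ξ ζ ∈ X i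

/-- Objective of `P_L^x`. -/
noncomputable def objLx (ψ : S.SFPolicy) (X : ∀ i : Fin S.M, Set (S.StateTraj i)) : EReal :=
  ∑ i : Fin S.M,
    sSup ((fun p : S.NoiseTraj i × S.Beliefs =>
        ((S.cost i (S.sfState ψ i p.1 p.2) (S.sfInput ψ i p.1 p.2) : ℝ) : EReal)) ''
      {p | p.1 ∈ S.Xi i ∧ p.2 ∈ S.BelSet X i})

/-- Optimal value of `P_L^x`. -/
noncomputable def valLx : EReal :=
  sInf {v : EReal | ∃ (ψ : S.SFPolicy) (X : ∀ i : Fin S.M, Set (S.StateTraj i)),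
    S.feasLx ψ X ∧ v = S.objLx ψ X}

end Sys

/-! ### Auxiliary development for Statement 3 -/

section Aux

lemma existsLeftInv {m n : ℕ} (E : Matrix (Fin m) (Fin n) ℝ) (h : E.rank = n) :
    ∃ F : Matrix (Fin n) (Fin m) ℝ, ∀ v, F.mulVec (E.mulVec v) = v := by
  have hker : LinearMap.ker E.mulVecLin = ⊥ := by
    have h2 := LinearMap.finrank_range_add_finrank_ker E.mulVecLin
    rw [Matrix.rank] at h
    have : Module.finrank ℝ (LinearMap.ker E.mulVecLin) = 0 := by
      simp [Module.finrank_fintype_fun_eq_card] at h2; omega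
    exact Submodule.finrank_eq_zero.mp this
  obtain ⟨g, hg⟩ := LinearMap.exists_leftInverse_of_injective E.mulVecLin hker
  refine ⟨LinearMap.toMatrix' g, fun v => ?_⟩
  have := LinearMap.congr_fun hg v
  rw [show (LinearMap.toMatrix' g).mulVec (E.mulVec v)
      = Matrix.toLin' (LinearMap.toMatrix' g) (E.mulVec v) from (Matrix.toLin'_apply _ _).symm,
    Matrix.toLin'_toMatrix']
  exact this

variable (S : Sys)

/-- Recovery of the uncertainty trajectory from the state history and the beliefs. -/
noncomputable def xirecAux
    (F : ∀ (i : Fin S.M) (t : Fin S.T), Matrix (Fin (S.nξ i)) (Fin (S.nx i)) ℝ)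
    (Ψ : S.LPolicy) (i : Fin S.M) (x : S.StateTraj i) (ζ : S.Beliefs) (t : ℕ) :
    Fin (S.nξ i) → ℝ :=
  if h : t < S.T then
    (F i ⟨t, h⟩).mulVec
      (x ⟨t+1, by omega⟩ - (S.A i ⟨t, h⟩).mulVec (x ⟨t, by omega⟩)
        - ∑ j ∈ S.Nbr i, (S.B i ⟨t, h⟩ j).mulVec (ζ j ⟨t, by omega⟩)
        - (S.D i ⟨t, h⟩).mulVec (Ψ i ⟨t, h⟩
            (fun σ : Fin S.T => if hσ : σ.val < t then xirecAux F Ψ i x ζ σ.val else 0) ζ))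
  else 0
  termination_by t
  decreasing_by omega

/-- The state-feedback policy induced by a local policy. -/
noncomputable def mkSF
    (F : ∀ (i : Fin S.M) (t : Fin S.T), Matrix (Fin (S.nξ i)) (Fin (S.nx i)) ℝ)
    (Ψ : S.LPolicy) : S.SFPolicy :=
  fun i t x ζ =>
    Ψ i t (fun σ : Fin S.T => if σ.val < t.val then xirecAux S F Ψ i x ζ σ.val else 0) ζ

/-- The local policy induced by a state-feedback policy (closed-loop simulation). -/
noncomputable def mkL (ψ : S.SFPolicy) : S.LPolicy :=
  fun i t ξ ζ =>
    ψ i t (fun τ : Fin (S.T+1) =>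
      if τ.val ≤ t.val then S.sfAux i (ψ i) ξ ζ τ.val else 0) ζ

end Aux
section Aux2
variable (S : Sys)

lemma xirecAux_congr
    (F : ∀ (i : Fin S.M) (t : Fin S.T), Matrix (Fin (S.nξ i)) (Fin (S.nx i)) ℝ)
    (Ψ : S.LPolicy) (hΨ : S.LCausal Ψ) (i : Fin S.M)
    (x x' : S.StateTraj i) (ζ ζ' : S.Beliefs) :
    ∀ t : ℕ, (∀ s : Fin (S.T+1), s.val ≤ t + 1 → x s = x' s) →
      (∀ j ∈ S.Nbr i, ∀ s : Fin (S.T+1), s.val ≤ t → ζ j s = ζ' j s) →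
      xirecAux S F Ψ i x ζ t = xirecAux S F Ψ i x' ζ' t := by
  intro t
  induction t using Nat.strong_induction_on with
  | _ t IH =>
    intro hx hζ
    rw [xirecAux, xirecAux]
    by_cases h : t < S.T
    · rw [dif_pos h, dif_pos h]
      have e1 : x ⟨t+1, by omega⟩ = x' ⟨t+1, by omega⟩ := hx _ (le_refl (t+1))
      have e2 : x ⟨t, by omega⟩ = x' ⟨t, by omega⟩ := hx _ (Nat.le_succ t)
      have e3 : ∑ j ∈ S.Nbr i, (S.B i ⟨t, h⟩ j).mulVec (ζ j ⟨t, by omega⟩)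
          = ∑ j ∈ S.Nbr i, (S.B i ⟨t, h⟩ j).mulVec (ζ' j ⟨t, by omega⟩) := by
        refine Finset.sum_congr rfl fun j hj => ?_
        rw [hζ j hj _ (le_refl t)]
      have e4 : Ψ i ⟨t, h⟩
            (fun σ : Fin S.T => if hσ : σ.val < t then xirecAux S F Ψ i x ζ σ.val else 0) ζ
          = Ψ i ⟨t, h⟩
            (fun σ : Fin S.T => if hσ : σ.val < t then xirecAux S F Ψ i x' ζ' σ.val else 0) ζ' := by
        refine hΨ i ⟨t, h⟩ _ _ _ _ (fun σ hσ0 => ?_) (fun j hj s hs0 => ?_)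
        · have hσ : σ.val < t := hσ0
          rw [dif_pos hσ, dif_pos hσ]
          exact IH σ.val hσ (fun s hs => hx s (by omega)) (fun j hj s hs => hζ j hj s (by omega))
        · exact hζ j hj s hs0
      rw [e1, e2, e3, e4]
    · rw [dif_neg h, dif_neg h]

lemma sfAux_congr (ψ : S.SFPolicy) (hψ : S.SFCausal ψ) (i : Fin S.M) :
    ∀ t : ℕ, ∀ (ξ ξ' : S.NoiseTraj i) (ζ ζ' : S.Beliefs),
      (∀ σ : Fin S.T, σ.val < t → ξ σ = ξ' σ) →
      (∀ j ∈ S.Nbr i, ∀ s : Fin (S.T+1), s.val < t → ζ j s = ζ' j s) →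
      S.sfAux i (ψ i) ξ ζ t = S.sfAux i (ψ i) ξ' ζ' t := by
  intro t
  induction t using Nat.strong_induction_on with
  | _ t IH =>
    intro ξ ξ' ζ ζ' hξ hζ
    match t with
    | 0 => rw [Sys.sfAux, Sys.sfAux]
    | t+1 =>
      rw [Sys.sfAux, Sys.sfAux]
      by_cases h : t < S.T
      · rw [dif_pos h, dif_pos h]
        have e1 : S.sfAux i (ψ i) ξ ζ t = S.sfAux i (ψ i) ξ' ζ' t :=
          IH t (by omega) ξ ξ' ζ ζ' (fun σ hσ => hξ σ (by omega))
            (fun j hj s hs => hζ j hj s (by omega))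
        have e3 : ∑ j ∈ S.Nbr i, (S.B i ⟨t, h⟩ j).mulVec (ζ j ⟨t, Nat.lt_succ_of_lt h⟩)
            = ∑ j ∈ S.Nbr i, (S.B i ⟨t, h⟩ j).mulVec (ζ' j ⟨t, Nat.lt_succ_of_lt h⟩) := by
          refine Finset.sum_congr rfl fun j hj => ?_
          rw [hζ j hj _ (Nat.lt_succ_self t)]
        have e4 : ψ i ⟨t, h⟩
              (fun τ : Fin (S.T+1) => if hτ : (τ : ℕ) ≤ t then S.sfAux i (ψ i) ξ ζ τ.val else 0) ζ
            = ψ i ⟨t, h⟩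
              (fun τ : Fin (S.T+1) => if hτ : (τ : ℕ) ≤ t then S.sfAux i (ψ i) ξ' ζ' τ.val else 0)
              ζ' := by
          refine hψ i ⟨t, h⟩ _ _ _ _ (fun τ hτ0 => ?_) (fun j hj s hs0 => ?_)
          · have hτ : (τ : ℕ) ≤ t := hτ0
            by_cases hτ2 : (τ : ℕ) ≤ t
            · rw [dif_pos hτ2, dif_pos hτ2]
              exact IH τ.val (by omega) ξ ξ' ζ ζ' (fun σ hσ => hξ σ (by omega))
                (fun j hj s hs => hζ j hj s (by omega))
            · rw [dif_neg hτ2, dif_neg hτ2]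
          · have hs : (s : ℕ) ≤ t := hs0
            exact hζ j hj s (by omega)
        have e5 : ξ ⟨t, h⟩ = ξ' ⟨t, h⟩ := hξ _ (Nat.lt_succ_self t)
        rw [e1, e3, e4, e5]
      · rw [dif_neg h, dif_neg h]

end Aux2
section Aux3
variable (S : Sys)

lemma xirec_spec
    (F : ∀ (i : Fin S.M) (t : Fin S.T), Matrix (Fin (S.nξ i)) (Fin (S.nx i)) ℝ)
    (hF : ∀ i t v, (F i t).mulVec ((S.E i t).mulVec v) = v)
    (Ψ : S.LPolicy) (hΨ : S.LCausal Ψ) (i : Fin S.M) (ξ : S.NoiseTraj i) (ζ : S.Beliefs) :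
    ∀ t : ℕ, ∀ h : t < S.T,
      xirecAux S F Ψ i (S.lState Ψ i ξ ζ) ζ t = ξ ⟨t, h⟩ := by
  intro t
  induction t using Nat.strong_induction_on with
  | _ t IH =>
    intro h
    rw [xirecAux, dif_pos h]
    have e4 : Ψ i ⟨t, h⟩
          (fun σ : Fin S.T =>
            if hσ : σ.val < t then xirecAux S F Ψ i (S.lState Ψ i ξ ζ) ζ σ.val else 0) ζ
        = S.lInput Ψ i ξ ζ ⟨t, h⟩ := by
      refine hΨ i ⟨t, h⟩ _ _ _ _ (fun σ hσ0 => ?_) (fun j hj s hs => rfl)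
      have hσ : σ.val < t := hσ0
      rw [dif_pos hσ, IH σ.val hσ σ.isLt]
    rw [e4]
    have hx1 : S.lState Ψ i ξ ζ ⟨t+1, by omega⟩
        = (S.A i ⟨t, h⟩).mulVec (S.lState Ψ i ξ ζ ⟨t, by omega⟩)
          + ∑ j ∈ S.Nbr i, (S.B i ⟨t, h⟩ j).mulVec (ζ j ⟨t, by omega⟩)
          + (S.D i ⟨t, h⟩).mulVec (S.lInput Ψ i ξ ζ ⟨t, h⟩)
          + (S.E i ⟨t, h⟩).mulVec (ξ ⟨t, h⟩) := by
      show S.trajAux i ζ (S.lInput Ψ i ξ ζ) ξ (t+1) = _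
      rw [Sys.trajAux, dif_pos h]
      rfl
    rw [hx1]
    have harg :
        (S.A i ⟨t, h⟩).mulVec (S.lState Ψ i ξ ζ ⟨t, by omega⟩)
          + ∑ j ∈ S.Nbr i, (S.B i ⟨t, h⟩ j).mulVec (ζ j ⟨t, by omega⟩)
          + (S.D i ⟨t, h⟩).mulVec (S.lInput Ψ i ξ ζ ⟨t, h⟩)
          + (S.E i ⟨t, h⟩).mulVec (ξ ⟨t, h⟩)
          - (S.A i ⟨t, h⟩).mulVec (S.lState Ψ i ξ ζ ⟨t, by omega⟩)
          - ∑ j ∈ S.Nbr i, (S.B i ⟨t, h⟩ j).mulVec (ζ j ⟨t, by omega⟩)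
          - (S.D i ⟨t, h⟩).mulVec (S.lInput Ψ i ξ ζ ⟨t, h⟩)
        = (S.E i ⟨t, h⟩).mulVec (ξ ⟨t, h⟩) := by abel
    rw [harg, hF]

lemma sfAux_mkSF
    (F : ∀ (i : Fin S.M) (t : Fin S.T), Matrix (Fin (S.nξ i)) (Fin (S.nx i)) ℝ)
    (hF : ∀ i t v, (F i t).mulVec ((S.E i t).mulVec v) = v)
    (Ψ : S.LPolicy) (hΨ : S.LCausal Ψ) (i : Fin S.M) (ξ : S.NoiseTraj i) (ζ : S.Beliefs) :
    ∀ t : ℕ, S.sfAux i (mkSF S F Ψ i) ξ ζ t = S.trajAux i ζ (S.lInput Ψ i ξ ζ) ξ t := by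
  intro t
  induction t using Nat.strong_induction_on with
  | _ t IH =>
    match t with
    | 0 => rw [Sys.sfAux, Sys.trajAux]
    | t+1 =>
      rw [Sys.sfAux, Sys.trajAux]
      by_cases h : t < S.T
      · rw [dif_pos h, dif_pos h]
        have e1 := IH t (by omega)
        have e4 : mkSF S F Ψ i ⟨t, h⟩
              (fun τ : Fin (S.T+1) =>
                if hτ : (τ : ℕ) ≤ t then S.sfAux i (mkSF S F Ψ i) ξ ζ τ.val else 0) ζ
            = S.lInput Ψ i ξ ζ ⟨t, h⟩ := by
          rw [mkSF]
          refine hΨ i ⟨t, h⟩ _ _ _ _ (fun σ hσ0 => ?_) (fun j hj s hs => rfl)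
          have hσ : σ.val < t := hσ0
          rw [if_pos hσ]
          have hcong : xirecAux S F Ψ i
                (fun τ : Fin (S.T+1) =>
                  if hτ : (τ : ℕ) ≤ t then S.sfAux i (mkSF S F Ψ i) ξ ζ τ.val else 0) ζ σ.val
              = xirecAux S F Ψ i (S.lState Ψ i ξ ζ) ζ σ.val := by
            refine xirecAux_congr S F Ψ hΨ i _ _ ζ ζ σ.val (fun s hs => ?_) (fun j hj s hs => rfl)
            have hs' : (s : ℕ) ≤ t := by omega
            rw [dif_pos hs', IH s.val (by omega)]
            rfl
          rw [hcong, xirec_spec S F hF Ψ hΨ i ξ ζ σ.val σ.isLt]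
        rw [e1, e4]
      · rw [dif_neg h, dif_neg h]

lemma sfState_mkSF
    (F : ∀ (i : Fin S.M) (t : Fin S.T), Matrix (Fin (S.nξ i)) (Fin (S.nx i)) ℝ)
    (hF : ∀ i t v, (F i t).mulVec ((S.E i t).mulVec v) = v)
    (Ψ : S.LPolicy) (hΨ : S.LCausal Ψ) (i : Fin S.M) (ξ : S.NoiseTraj i) (ζ : S.Beliefs) :
    S.sfState (mkSF S F Ψ) i ξ ζ = S.lState Ψ i ξ ζ :=
  funext fun τ => sfAux_mkSF S F hF Ψ hΨ i ξ ζ τ.val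

lemma sfInput_mkSF
    (F : ∀ (i : Fin S.M) (t : Fin S.T), Matrix (Fin (S.nξ i)) (Fin (S.nx i)) ℝ)
    (hF : ∀ i t v, (F i t).mulVec ((S.E i t).mulVec v) = v)
    (Ψ : S.LPolicy) (hΨ : S.LCausal Ψ) (i : Fin S.M) (ξ : S.NoiseTraj i) (ζ : S.Beliefs) :
    S.sfInput (mkSF S F Ψ) i ξ ζ = S.lInput Ψ i ξ ζ := by
  funext t
  show mkSF S F Ψ i t _ ζ = _
  rw [mkSF]
  refine hΨ i t _ _ _ _ (fun σ hσ => ?_) (fun j hj s hs => rfl)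
  rw [if_pos hσ]
  have hcong : xirecAux S F Ψ i
        (fun τ : Fin (S.T+1) =>
          if (τ : ℕ) ≤ (t : ℕ) then S.sfAux i (mkSF S F Ψ i) ξ ζ τ.val else 0) ζ σ.val
      = xirecAux S F Ψ i (S.lState Ψ i ξ ζ) ζ σ.val := by
    refine xirecAux_congr S F Ψ hΨ i _ _ ζ ζ σ.val (fun s hs => ?_) (fun j hj s hs => rfl)
    have hs' : (s : ℕ) ≤ (t : ℕ) := by omega
    rw [if_pos hs', sfAux_mkSF S F hF Ψ hΨ i ξ ζ s.val]
    rfl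
  rw [hcong, xirec_spec S F hF Ψ hΨ i ξ ζ σ.val σ.isLt]

end Aux3
section Aux4
variable (S : Sys)

lemma mkSF_causal
    (F : ∀ (i : Fin S.M) (t : Fin S.T), Matrix (Fin (S.nξ i)) (Fin (S.nx i)) ℝ)
    (Ψ : S.LPolicy) (hΨ : S.LCausal Ψ) : S.SFCausal (mkSF S F Ψ) := by
  intro i t x x' ζ ζ' hx hζ
  rw [mkSF, mkSF]
  refine hΨ i t _ _ _ _ (fun σ hσ => ?_) hζ
  rw [if_pos hσ, if_pos hσ]
  refine xirecAux_congr S F Ψ hΨ i x x' ζ ζ' σ.val (fun s hs => hx s (by omega))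
    (fun j hj s hs => hζ j hj s (by omega))

lemma trajAux_mkL (ψ : S.SFPolicy) (i : Fin S.M) (ξ : S.NoiseTraj i) (ζ : S.Beliefs) :
    ∀ t : ℕ, S.trajAux i ζ (S.lInput (mkL S ψ) i ξ ζ) ξ t = S.sfAux i (ψ i) ξ ζ t := by
  intro t
  induction t using Nat.strong_induction_on with
  | _ t IH =>
    match t with
    | 0 => rw [Sys.trajAux, Sys.sfAux]
    | t+1 =>
      rw [Sys.trajAux, Sys.sfAux]
      by_cases h : t < S.T
      · rw [dif_pos h, dif_pos h, IH t (by omega)]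
        rfl
      · rw [dif_neg h, dif_neg h]

lemma lState_mkL (ψ : S.SFPolicy) (i : Fin S.M) (ξ : S.NoiseTraj i) (ζ : S.Beliefs) :
    S.lState (mkL S ψ) i ξ ζ = S.sfState ψ i ξ ζ :=
  funext fun τ => trajAux_mkL S ψ i ξ ζ τ.val

lemma lInput_mkL (ψ : S.SFPolicy) (i : Fin S.M) (ξ : S.NoiseTraj i) (ζ : S.Beliefs) :
    S.lInput (mkL S ψ) i ξ ζ = S.sfInput ψ i ξ ζ := rfl

lemma mkL_causal (ψ : S.SFPolicy) (hψ : S.SFCausal ψ) : S.LCausal (mkL S ψ) := by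
  intro i t ξ ξ' ζ ζ' hξ hζ
  rw [mkL, mkL]
  refine hψ i t _ _ _ _ (fun τ hτ => ?_) hζ
  rw [if_pos hτ, if_pos hτ]
  exact sfAux_congr S ψ hψ i τ.val ξ ξ' ζ ζ' (fun σ hσ => hξ σ (by omega))
    (fun j hj s hs => hζ j hj s (by omega))

end Aux4
section Main
variable (S : Sys)

lemma transfer_LtoLx (hE : ∀ (i : Fin S.M) (t : Fin S.T), (S.E i t).rank = S.nξ i)
    (Ψ : S.LPolicy) (X : ∀ i : Fin S.M, Set (S.StateTraj i)) (hfeas : S.feasL Ψ X) :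
    ∃ ψ : S.SFPolicy, S.feasLx ψ X ∧
      (∀ i, ∀ ζ ∈ S.BelSet X i, ∀ ξ ∈ S.Xi i,
        S.sfState ψ i ξ ζ = S.lState Ψ i ξ ζ ∧ S.sfInput ψ i ξ ζ = S.lInput Ψ i ξ ζ) ∧
      S.objLx ψ X = S.objL Ψ X := by
  obtain ⟨hcaus, hX, hcon⟩ := hfeas
  choose F hF using fun i t => existsLeftInv (S.E i t) (hE i t)
  refine ⟨mkSF S F Ψ, ⟨mkSF_causal S F Ψ hcaus, hX, fun i ζ hζ ξ hξ => ?_⟩,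
    fun i ζ hζ ξ hξ => ⟨sfState_mkSF S F hF Ψ hcaus i ξ ζ, sfInput_mkSF S F hF Ψ hcaus i ξ ζ⟩,
    ?_⟩
  · rw [sfState_mkSF S F hF Ψ hcaus, sfInput_mkSF S F hF Ψ hcaus]
    exact hcon i ζ hζ ξ hξ
  · unfold Sys.objLx Sys.objL
    refine Finset.sum_congr rfl fun i _ => ?_
    have hfn : (fun p : S.NoiseTraj i × S.Beliefs =>
          ((S.cost i (S.sfState (mkSF S F Ψ) i p.1 p.2) (S.sfInput (mkSF S F Ψ) i p.1 p.2) : ℝ)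
            : EReal))
        = fun p : S.NoiseTraj i × S.Beliefs =>
          ((S.cost i (S.lState Ψ i p.1 p.2) (S.lInput Ψ i p.1 p.2) : ℝ) : EReal) :=
      funext fun p => by
        rw [sfState_mkSF S F hF Ψ hcaus, sfInput_mkSF S F hF Ψ hcaus]
    rw [hfn]

lemma transfer_LxtoL (ψ : S.SFPolicy) (X : ∀ i : Fin S.M, Set (S.StateTraj i))
    (hfeas : S.feasLx ψ X) :
    S.feasL (mkL S ψ) X ∧ S.objL (mkL S ψ) X = S.objLx ψ X := by
  obtain ⟨hcaus, hX, hcon⟩ := hfeas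
  refine ⟨⟨mkL_causal S ψ hcaus, hX, fun i ζ hζ ξ hξ => ?_⟩, ?_⟩
  · rw [lState_mkL, lInput_mkL]
    exact hcon i ζ hζ ξ hξ
  · unfold Sys.objLx Sys.objL
    refine Finset.sum_congr rfl fun i _ => ?_
    have hfn : (fun p : S.NoiseTraj i × S.Beliefs =>
          ((S.cost i (S.lState (mkL S ψ) i p.1 p.2) (S.lInput (mkL S ψ) i p.1 p.2) : ℝ) : EReal))
        = fun p : S.NoiseTraj i × S.Beliefs =>
          ((S.cost i (S.sfState ψ i p.1 p.2) (S.sfInput ψ i p.1 p.2) : ℝ) : EReal) :=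
      funext fun p => by rw [lState_mkL, lInput_mkL]
    rw [hfn]

end Main

/-- Assume every matrix `E_{i,t}` has full column rank. Then for every
feasible pair `((Ψ_i)_i, (X_i)_i)` of the local problem `P_L` there exists a feasible
pair `((ψ_i)_i, (X_i)_i)` of the state-feedback local problem `P_L^x`, with the same
state-forecast sets, whose closed-loop state-input trajectories coincide with those of
`Ψ` for every `ξ_i ∈ Ξ_i` and `ζ_{N_i} ∈ X_{N_i}`, so that the two pairs achieve the
same objective value; consequently `val(P_L^x) = val(P_L)`. -/
theorem uncertaintyFeedback_to_stateFeedback (S : Sys)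
    (hE : ∀ (i : Fin S.M) (t : Fin S.T), (S.E i t).rank = S.nξ i) :
    (∀ (Ψ : S.LPolicy) (X : ∀ i : Fin S.M, Set (S.StateTraj i)), S.feasL Ψ X →
      ∃ ψ : S.SFPolicy, S.feasLx ψ X ∧
        (∀ i, ∀ ζ ∈ S.BelSet X i, ∀ ξ ∈ S.Xi i,
          S.sfState ψ i ξ ζ = S.lState Ψ i ξ ζ ∧ S.sfInput ψ i ξ ζ = S.lInput Ψ i ξ ζ) ∧
        S.objLx ψ X = S.objL Ψ X) ∧
    S.valLx = S.valL := by
  refine ⟨fun Ψ X hfeas => transfer_LtoLx S hE Ψ X hfeas, ?_⟩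
  unfold Sys.valLx Sys.valL
  congr 1
  ext v
  constructor
  · rintro ⟨ψ, X, hfeas, rfl⟩
    obtain ⟨h1, h2⟩ := transfer_LxtoL S ψ X hfeas
    exact ⟨mkL S ψ, X, h1, h2.symm⟩
  · rintro ⟨Ψ, X, hfeas, rfl⟩
    obtain ⟨ψ, h1, _, h3⟩ := transfer_LtoLx S hE Ψ X hfeas
    exact ⟨ψ, X, h1, h3.symm⟩
end

section
/- Let ((Ψ_i)_i,(X_i)_i) be a feasible pair of the local problem P_L. Define recursively, over stages, the maps χ̂_{i,t} by χ̂_{i,1} := x_{i,1} and χ̂_{i,t+1}(ξ_{N̄_i}^{t}) := A_{i,t} χ̂_{i,t}(ξ_{N̄_i}^{t−1}) + B_{i,t}[χ̂_{j,t}(ξ_{N̄_j}^{t−1})]_{j∈N_i} + D_{i,t} Ψ_{i,t}(ξ_i^{t−1}, [χ̂_j^t]_{j∈N_i}) + E_{i,t} ξ_{i,t}, where χ̂_j^t denotes the history (χ̂_{j,1},…,χ̂_{j,t}) (well defined since N̄_j ⊆ N̄_i for j ∈ N_i). Then: (i) for every i and every ξ_{N̄_i} ∈ Ξ_{N̄_i},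 the full trajectory (χ̂_{i,1}(·),…,χ̂_{i,T+1}(·)) lies in X_i; (ii) the policy family Φ̂_{i,t}(ξ_{N̄_i}^{t−1}) := Ψ_{i,t}(ξ_i^{t−1}, [χ̂_j^t]_{j∈N_i}) is feasible for the partially nested problem P_PN; and (iii) its objective value in P_PN is at most that of ((Ψ_i)_i,(X_i)_i) in P_L, i.e., Σ_{i=1}^M sup_{ξ_{N̄_i}∈Ξ_{N̄_i}} J_i(χ̂_i, Φ̂_i) ≤ Σ_{i=1}^M sup_{ξ_i∈Ξ_i, ζ_{N_i}∈X_{N_i}} J_i(x_i,u_i). -/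
open scoped BigOperators

namespace Sys

variable (S : Sys)

/-- The recursively defined trajectories `χ̂_{i,t}` induced by a local policy `Ψ`
when the beliefs are replaced by the actual (recursively generated) trajectories of
the neighbours:
`χ̂_{i,t+1} = A χ̂_{i,t} + B [χ̂_{j,t}]_{j ∈ N_i} + D Ψ_{i,t}(ξ_i^{t-1}, [χ̂_j^t]_{j ∈ N_i}) + E ξ_{i,t}`. -/
noncomputable def hatAux (Ψ : S.LPolicy) (ξ : S.NoiseAll) :
    ℕ → ∀ i : Fin S.M, Fin (S.nx i) → ℝ
  | 0 => fun i => S.xinit i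
  | (t+1) => fun i =>
      if h : t < S.T then
        (S.A i ⟨t, h⟩).mulVec (hatAux Ψ ξ t i)
        + ∑ j ∈ S.Nbr i, (S.B i ⟨t, h⟩ j).mulVec (hatAux Ψ ξ t j)
        + (S.D i ⟨t, h⟩).mulVec (Ψ i ⟨t, h⟩ (ξ i)
            (fun j (τ : Fin (S.T+1)) =>
              if hτ : (τ : ℕ) ≤ t then hatAux Ψ ξ τ.val j else 0))
        + (S.E i ⟨t, h⟩).mulVec (ξ i ⟨t, h⟩)
      else 0
  termination_by t => t
  decreasing_by all_goals omega

/-- The trajectory `χ̂_i(ξ_{N̄_i})`. -/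
noncomputable def hatTraj (Ψ : S.LPolicy) (ξ : S.NoiseAll) (i : Fin S.M) : S.StateTraj i :=
  fun τ => S.hatAux Ψ ξ τ.val i

/-- The partially nested policy `Φ̂_{i,t}(ξ_{N̄_i}^{t-1}) := Ψ_{i,t}(ξ_i^{t-1}, [χ̂_j^t]_{j ∈ N_i})`. -/
noncomputable def hatPolicy (Ψ : S.LPolicy) : S.CPolicy :=
  fun i t ξ => Ψ i t (ξ i)
    (fun j (τ : Fin (S.T+1)) => if (τ : ℕ) ≤ (t : ℕ) then S.hatAux Ψ ξ τ.val j else 0)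

end Sys
namespace Sys

variable (S : Sys) (Ψ : S.LPolicy)

lemma hatAux_succ (ξ : S.NoiseAll) (t : ℕ) (i : Fin S.M) :
    S.hatAux Ψ ξ (t+1) i =
      if h : t < S.T then
        (S.A i ⟨t, h⟩).mulVec (S.hatAux Ψ ξ t i)
        + ∑ j ∈ S.Nbr i, (S.B i ⟨t, h⟩ j).mulVec (S.hatAux Ψ ξ t j)
        + (S.D i ⟨t, h⟩).mulVec (Ψ i ⟨t, h⟩ (ξ i)
            (fun j (τ : Fin (S.T+1)) =>
              if hτ : (τ : ℕ) ≤ t then S.hatAux Ψ ξ τ.val j else 0))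
        + (S.E i ⟨t, h⟩).mulVec (ξ i ⟨t, h⟩)
      else 0 := by
  rw [Sys.hatAux]

lemma hatAux_zero (ξ : S.NoiseAll) (i : Fin S.M) :
    S.hatAux Ψ ξ 0 i = S.xinit i := by
  rw [Sys.hatAux]

/-- `hatAux` at time `t` depends only on the uncertainties of `N̄_i` before `t`. -/
lemma hatAux_causal (hC : S.LCausal Ψ) (ξ ξ' : S.NoiseAll) :
    ∀ (t : ℕ) (i : Fin S.M),
      (∀ j ∈ S.Nbar i, ∀ τ : Fin S.T, (τ : ℕ) < t → ξ j τ = ξ' j τ) →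
      S.hatAux Ψ ξ t i = S.hatAux Ψ ξ' t i := by
  intro t
  induction t using Nat.strong_induction_on with
  | _ t IH =>
    cases t with
    | zero => intro i _; rw [S.hatAux_zero, S.hatAux_zero]
    | succ t =>
      intro i hag
      rw [S.hatAux_succ, S.hatAux_succ]
      by_cases h : t < S.T
      · rw [dif_pos h, dif_pos h]
        have hA : S.hatAux Ψ ξ t i = S.hatAux Ψ ξ' t i :=
          IH t (Nat.lt_succ_self t) i (fun j hj τ hτ => hag j hj τ (by omega))
        have hS : ∑ j ∈ S.Nbr i, (S.B i ⟨t, h⟩ j).mulVec (S.hatAux Ψ ξ t j)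
            = ∑ j ∈ S.Nbr i, (S.B i ⟨t, h⟩ j).mulVec (S.hatAux Ψ ξ' t j) :=
          Finset.sum_congr rfl fun j hj => by
            rw [IH t (Nat.lt_succ_self t) j
              (fun k hk τ hτ => hag k (S.Nbar_nested i j hj hk) τ (by omega))]
        have hE : ξ i ⟨t, h⟩ = ξ' i ⟨t, h⟩ :=
          hag i (S.Nbar_self i) ⟨t, h⟩ (Nat.lt_succ_self t)
        have hD : Ψ i ⟨t, h⟩ (ξ i)
              (fun j (τ : Fin (S.T+1)) =>
                if hτ : (τ : ℕ) ≤ t then S.hatAux Ψ ξ τ.val j else 0)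
            = Ψ i ⟨t, h⟩ (ξ' i)
              (fun j (τ : Fin (S.T+1)) =>
                if hτ : (τ : ℕ) ≤ t then S.hatAux Ψ ξ' τ.val j else 0) := by
          refine hC i ⟨t, h⟩ (ξ i) (ξ' i) _ _
            (fun τ hτ => hag i (S.Nbar_self i) τ (Nat.lt_succ_of_lt hτ)) ?_
          intro j hj τ hτ
          have hτ' : (τ : ℕ) ≤ t := hτ
          rw [dif_pos hτ', dif_pos hτ']
          exact IH τ.val (by omega) j
            (fun k hk τ2 hτ2 => hag k (S.Nbar_nested i j hj hk) τ2 (by omega))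
        rw [hA, hS, hE, hD]
      · rw [dif_neg h, dif_neg h]

/-- If the beliefs agree with `hatAux` up to stage `N`, the closed-loop local
trajectory agrees with `hatAux` up to stage `N+1`. -/
lemma traj_eq (hC : S.LCausal Ψ) (ξ : S.NoiseAll) (i : Fin S.M) (ζ : S.Beliefs) (N : ℕ)
    (hζ : ∀ j ∈ S.Nbr i, ∀ τ : Fin (S.T+1), (τ : ℕ) ≤ N → ζ j τ = S.hatAux Ψ ξ τ.val j) :
    ∀ t ≤ N + 1, S.trajAux i ζ (S.lInput Ψ i (ξ i) ζ) (ξ i) t = S.hatAux Ψ ξ t i := by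
  intro t
  induction t with
  | zero => intro _; rw [Sys.trajAux, S.hatAux_zero]
  | succ t IHt =>
    intro ht
    rw [Sys.trajAux, S.hatAux_succ]
    by_cases h : t < S.T
    · rw [dif_pos h, dif_pos h, IHt (by omega)]
      have hS : ∑ j ∈ S.Nbr i, (S.B i ⟨t, h⟩ j).mulVec (ζ j ⟨t, Nat.lt_succ_of_lt h⟩)
          = ∑ j ∈ S.Nbr i, (S.B i ⟨t, h⟩ j).mulVec (S.hatAux Ψ ξ t j) :=
        Finset.sum_congr rfl fun j hj => by
          rw [hζ j hj ⟨t, Nat.lt_succ_of_lt h⟩ (by simpa using by omega : (t : ℕ) ≤ N)]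
      have hD : Ψ i ⟨t, h⟩ (ξ i) ζ
          = Ψ i ⟨t, h⟩ (ξ i)
            (fun j (τ : Fin (S.T+1)) =>
              if hτ : (τ : ℕ) ≤ t then S.hatAux Ψ ξ τ.val j else 0) := by
        refine hC i ⟨t, h⟩ (ξ i) (ξ i) _ _ (fun τ _ => rfl) ?_
        intro j hj τ hτ
        have hτ' : (τ : ℕ) ≤ t := hτ
        rw [dif_pos hτ']
        exact hζ j hj τ (by omega)
      simp only [Sys.lInput]
      rw [hS, hD]
    · rw [dif_neg h, dif_neg h]

lemma input_eq (hC : S.LCausal Ψ) (ξ : S.NoiseAll) (i : Fin S.M) (ζ : S.Beliefs)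
    (t : Fin S.T)
    (hζ : ∀ j ∈ S.Nbr i, ∀ τ : Fin (S.T+1), (τ : ℕ) ≤ (t : ℕ) →
      ζ j τ = S.hatAux Ψ ξ τ.val j) :
    Ψ i t (ξ i) ζ = S.hatPolicy Ψ i t ξ := by
  refine hC i t (ξ i) (ξ i) ζ _ (fun τ _ => rfl) ?_
  intro j hj τ hτ
  rw [if_pos hτ]
  exact hζ j hj τ hτ

lemma joint_eq (ξ : S.NoiseAll) :
    ∀ (t : ℕ) (i : Fin S.M),
      S.jointAux (fun i' t' => S.hatPolicy Ψ i' t' ξ) ξ t i = S.hatAux Ψ ξ t i := by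
  intro t
  induction t with
  | zero => intro i; rw [Sys.jointAux, S.hatAux_zero]
  | succ t IH =>
    intro i
    simp only [Sys.jointAux]
    rw [S.hatAux_succ]
    by_cases h : t < S.T
    · rw [dif_pos h, dif_pos h, IH i]
      have hS : ∑ j ∈ S.Nbr i,
            (S.B i ⟨t, h⟩ j).mulVec
              (S.jointAux (fun i' t' => S.hatPolicy Ψ i' t' ξ) ξ t j)
          = ∑ j ∈ S.Nbr i, (S.B i ⟨t, h⟩ j).mulVec (S.hatAux Ψ ξ t j) :=
        Finset.sum_congr rfl fun j _ => by rw [IH j]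
      rw [hS]
      rfl
    · rw [dif_neg h, dif_neg h]

end Sys
/-- Let `((Ψ_i)_i, (X_i)_i)` be a feasible pair of the local problem
`P_L` and let `χ̂` be the recursively defined closed-loop trajectories (`hatTraj`) and
`Φ̂` the induced partially nested policy (`hatPolicy`). Then:
(i) for every `ξ_{N̄_i} ∈ Ξ_{N̄_i}` (as coordinates of some `ξ ∈ Ξ_M`), the trajectory
`χ̂_i` lies in `X_i`; (ii) `Φ̂` is feasible for the partially nested problem `P_PN`;
(iii) the objective value of `Φ̂` in `P_PN`, i.e.
`∑_i sup_{ξ_{N̄_i} ∈ Ξ_{N̄_i}} J_i(χ̂_i, Φ̂_i)` (the sup over `Ξ_{N̄_i}` encoded by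
pinning coordinates outside `N̄_i` to a selection `ξ0 ∈ Ξ_M`), is at most the objective
value of `((Ψ_i)_i, (X_i)_i)` in `P_L`. -/
theorem local_to_partiallyNested (S : Sys) (Ψ : S.LPolicy)
    (X : ∀ i : Fin S.M, Set (S.StateTraj i)) (hfeas : S.feasL Ψ X)
    (ξ0 : S.NoiseAll) (hξ0 : ξ0 ∈ S.XiM) :
    (∀ ξ ∈ S.XiM, ∀ i, S.hatTraj Ψ ξ i ∈ X i) ∧
    S.feasPN (S.hatPolicy Ψ) ∧
    (∑ i : Fin S.M,
      sSup ((fun ξ =>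
          ((S.cost i (S.hatTraj Ψ ξ i) (fun t => S.hatPolicy Ψ i t ξ) : ℝ) : EReal)) ''
        {ξ | ξ ∈ S.XiM ∧ ∀ j ∉ S.Nbar i, ξ j = ξ0 j})) ≤ S.objL Ψ X := by
  obtain ⟨hC, hXc, hcon⟩ := hfeas
  -- Inductive approximation of `hatTraj` by elements of `X i`.
  have key : ∀ N : ℕ, ∀ ξ ∈ S.XiM, ∀ i : Fin S.M, ∃ χ ∈ X i,
      ∀ τ : Fin (S.T+1), (τ : ℕ) ≤ N → χ τ = S.hatAux Ψ ξ τ.val i := by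
    intro N
    induction N with
    | zero =>
      intro ξ hξ i
      refine ⟨S.lState Ψ i (ξ i) (fun j => (hXc j).1.some),
        (hcon i _ (fun j _ => (hXc j).1.some_mem) (ξ i) (hξ i)).2, ?_⟩
      intro τ hτ
      have h0 : (τ : ℕ) = 0 := Nat.le_zero.mp hτ
      show S.trajAux i _ _ (ξ i) (τ : ℕ) = S.hatAux Ψ ξ (τ : ℕ) i
      rw [h0, Sys.trajAux, S.hatAux_zero]
    | succ N IHN =>
      intro ξ hξ i
      choose χf hχX hχeq using IHN ξ hξ
      refine ⟨S.lState Ψ i (ξ i) χf,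
        (hcon i χf (fun j _ => hχX j) (ξ i) (hξ i)).2, ?_⟩
      intro τ hτ
      exact S.traj_eq Ψ hC ξ i χf N (fun j _ τ' hτ' => hχeq j τ' hτ') (τ : ℕ) (by omega)
  have part1 : ∀ ξ ∈ S.XiM, ∀ i, S.hatTraj Ψ ξ i ∈ X i := by
    intro ξ hξ i
    obtain ⟨χ, hχ, heq⟩ := key S.T ξ hξ i
    have hχe : χ = S.hatTraj Ψ ξ i :=
      funext fun τ => heq τ (Nat.le_of_lt_succ τ.isLt)
    rwa [hχe] at hχ
  have hbel : ∀ ξ ∈ S.XiM, ∀ i, (fun j => S.hatTraj Ψ ξ j) ∈ S.BelSet X i :=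
    fun ξ hξ i j _ => part1 ξ hξ j
  have hstate : ∀ (ξ : S.NoiseAll) (i),
      S.lState Ψ i (ξ i) (fun j => S.hatTraj Ψ ξ j) = S.hatTraj Ψ ξ i := by
    intro ξ i
    funext τ
    exact S.traj_eq Ψ hC ξ i _ S.T (fun j _ τ' _ => rfl) (τ : ℕ)
      (Nat.le_succ_of_le (Nat.le_of_lt_succ τ.isLt))
  have hinput : ∀ (ξ : S.NoiseAll) (i),
      S.lInput Ψ i (ξ i) (fun j => S.hatTraj Ψ ξ j) = fun t => S.hatPolicy Ψ i t ξ := by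
    intro ξ i
    funext t
    exact S.input_eq Ψ hC ξ i _ t (fun j _ τ _ => rfl)
  have hPN : S.PNCausal (S.hatPolicy Ψ) := by
    intro i t ξ ξ' hag
    refine hC i t (ξ i) (ξ' i) _ _
      (fun τ hτ => hag i (S.Nbar_self i) τ hτ) ?_
    intro j hj τ hτ
    rw [if_pos hτ, if_pos hτ]
    exact S.hatAux_causal Ψ hC ξ ξ' (τ : ℕ) j
      (fun k hk τ2 hτ2 => hag k (S.Nbar_nested i j hj hk) τ2 (by omega))
  have hclS : ∀ ξ i, S.clState (S.hatPolicy Ψ) ξ i = S.hatTraj Ψ ξ i :=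
    fun ξ i => funext fun τ => S.joint_eq Ψ ξ (τ : ℕ) i
  have hrob : S.feasRobust (S.hatPolicy Ψ) := by
    intro ξ hξ i
    have h1 := (hcon i _ (hbel ξ hξ i) (ξ i) (hξ i)).1
    rw [hstate ξ i, hinput ξ i] at h1
    rw [hclS ξ i]
    exact h1
  refine ⟨part1, ⟨hPN, hrob⟩, ?_⟩
  rw [Sys.objL]
  refine Finset.sum_le_sum fun i _ => sSup_le_sSup ?_
  rintro v ⟨ξ, ⟨hξM, -⟩, rfl⟩
  refine ⟨(ξ i, fun j => S.hatTraj Ψ ξ j), ⟨hξM i, hbel ξ hξM i⟩, ?_⟩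
  simp only
  rw [hstate ξ i, hinput ξ i]
end

section
/- The local problem is a conservative approximation of the partially nested problem in terms of optimal values: val(P_L) ≥ val(P_PN). -/
open scoped BigOperators

namespace Sys

/-- The jointly simulated belief trajectories: `bel S Ψ ξ t` is the belief family whose
values at (zero-based) times `≤ t` equal the closed-loop joint state under `Ψ`. -/
noncomputable def bel (S : Sys) (Ψ : S.LPolicy) (ξ : S.NoiseAll) : ℕ → S.Beliefs
  | 0 => fun j _ => S.xinit j
  | (t+1) => fun j τ =>
      if h : τ.val = t + 1 ∧ t < S.T then
        (S.A j ⟨t, h.2⟩).mulVec (bel S Ψ ξ t j ⟨t, Nat.lt_succ_of_lt h.2⟩)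
        + ∑ k ∈ S.Nbr j, (S.B j ⟨t, h.2⟩ k).mulVec (bel S Ψ ξ t k ⟨t, Nat.lt_succ_of_lt h.2⟩)
        + (S.D j ⟨t, h.2⟩).mulVec (Ψ j ⟨t, h.2⟩ (ξ j) (bel S Ψ ξ t))
        + (S.E j ⟨t, h.2⟩).mulVec (ξ j ⟨t, h.2⟩)
      else bel S Ψ ξ t j τ

lemma bel_stable (S : Sys) (Ψ : S.LPolicy) (ξ : S.NoiseAll) :
    ∀ {s t : ℕ}, s ≤ t → ∀ j (τ : Fin (S.T+1)), τ.val ≤ s →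
      bel S Ψ ξ t j τ = bel S Ψ ξ s j τ := by
  intro s t h
  induction t with
  | zero =>
    have : s = 0 := Nat.le_zero.mp h
    subst this; intro j τ _; rfl
  | succ t ih =>
    rcases Nat.lt_or_ge s (t+1) with hlt | hge
    · intro j τ hτ
      have hs' : s ≤ t := Nat.lt_succ_iff.mp hlt
      have h1 : bel S Ψ ξ (t+1) j τ = bel S Ψ ξ t j τ := by
        simp only [bel]
        rw [dif_neg]
        rintro ⟨h1, -⟩; omega
      rw [h1, ih hs' j τ hτ]
    · have : s = t + 1 := le_antisymm h hge
      subst this; intro j τ _; rfl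

lemma bel_zero' (S : Sys) (Ψ : S.LPolicy) (ξ : S.NoiseAll) (t : ℕ) (j : Fin S.M)
    (τ : Fin (S.T+1)) (hτ : τ.val = 0) : bel S Ψ ξ t j τ = S.xinit j := by
  rw [bel_stable S Ψ ξ (Nat.zero_le t) j τ (by omega)]; rfl

/-- The lifted (partially nested) policy. -/
noncomputable def liftPolicy (S : Sys) (Ψ : S.LPolicy) : S.CPolicy :=
  fun i t ξ => Ψ i t (ξ i) (bel S Ψ ξ t.val)

lemma jointAux_eq_bel (S : Sys) (Ψ : S.LPolicy) (ξ : S.NoiseAll) :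
    ∀ (s : ℕ) (hs : s ≤ S.T) (i : Fin S.M),
      S.jointAux (fun i' t => Ψ i' t (ξ i') (bel S Ψ ξ t.val)) ξ s i
        = bel S Ψ ξ s i ⟨s, Nat.lt_succ_of_le hs⟩ := by
  intro s
  induction s with
  | zero => intro hs i; rfl
  | succ s ih =>
    intro hs i
    have hsT : s < S.T := hs
    simp only [Sys.jointAux, bel]
    rw [dif_pos hsT, dif_pos (by simp [hsT])]
    have hsum : (∑ k ∈ S.Nbr i, (S.B i ⟨s, hsT⟩ k).mulVec
          (S.jointAux (fun i' t => Ψ i' t (ξ i') (bel S Ψ ξ t.val)) ξ s k))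
        = ∑ k ∈ S.Nbr i, (S.B i ⟨s, hsT⟩ k).mulVec
          (bel S Ψ ξ s k ⟨s, Nat.lt_succ_of_lt hsT⟩) :=
      Finset.sum_congr rfl fun k _ => by rw [ih (le_of_lt hsT) k]
    rw [ih (le_of_lt hsT) i, hsum]

/-- Key simulation lemma: if the beliefs `η` agree with the simulated joint states up to
time `t`, then the trajectory of agent `i` under `Ψ` with beliefs `η` agrees with the
simulated joint state up to time `t+1`. -/
lemma trajAux_eq_bel (S : Sys) (Ψ : S.LPolicy) (hC : S.LCausal Ψ) (ξ : S.NoiseAll)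
    (i : Fin S.M) (η : S.Beliefs) (t : ℕ)
    (hη : ∀ k (τ : Fin (S.T+1)), τ.val ≤ t → η k τ = bel S Ψ ξ S.T k τ) :
    ∀ (s : ℕ) (hs : s ≤ S.T), s ≤ t + 1 →
      S.trajAux i η (fun τ' => Ψ i τ' (ξ i) η) (ξ i) s
        = bel S Ψ ξ S.T i ⟨s, Nat.lt_succ_of_le hs⟩ := by
  intro s
  induction s with
  | zero =>
    intro hs _
    rw [bel_zero' S Ψ ξ S.T i _ rfl]; rfl
  | succ s ih =>
    intro hs hst
    have hsT : s < S.T := hs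
    have hst' : s ≤ t := Nat.lt_succ_iff.mp (Nat.lt_of_lt_of_le (Nat.lt_succ_self s) hst)
    have hbT : bel S Ψ ξ S.T i ⟨s+1, Nat.lt_succ_of_le hs⟩
        = bel S Ψ ξ (s+1) i ⟨s+1, Nat.lt_succ_of_le hs⟩ :=
      bel_stable S Ψ ξ hs i _ (le_refl _)
    rw [hbT]
    simp only [Sys.trajAux, bel]
    rw [dif_pos hsT, dif_pos (by simp [hsT])]
    have hb1 : ∀ k (τ : Fin (S.T+1)), τ.val ≤ s → bel S Ψ ξ S.T k τ = bel S Ψ ξ s k τ :=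
      fun k τ hτ => bel_stable S Ψ ξ (le_of_lt hsT) k τ hτ
    have hΨ : Ψ i ⟨s, hsT⟩ (ξ i) η = Ψ i ⟨s, hsT⟩ (ξ i) (bel S Ψ ξ s) := by
      refine hC i ⟨s, hsT⟩ (ξ i) (ξ i) η (bel S Ψ ξ s) (fun τ _ => rfl) ?_
      intro k _ τ hτ'
      have hτ : (τ : ℕ) ≤ s := hτ'
      rw [hη k τ (le_trans hτ hst'), hb1 k τ hτ]
    have hsum : (∑ k ∈ S.Nbr i, (S.B i ⟨s, hsT⟩ k).mulVec (η k ⟨s, Nat.lt_succ_of_lt hsT⟩))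
        = ∑ k ∈ S.Nbr i, (S.B i ⟨s, hsT⟩ k).mulVec
          (bel S Ψ ξ s k ⟨s, Nat.lt_succ_of_lt hsT⟩) :=
      Finset.sum_congr rfl fun k _ => by
        rw [hη k ⟨s, Nat.lt_succ_of_lt hsT⟩ hst', hb1 k ⟨s, Nat.lt_succ_of_lt hsT⟩ (le_refl s)]
    rw [hΨ, ih (le_of_lt hsT) (le_trans (Nat.le_succ s) hst),
      hb1 i ⟨s, Nat.lt_succ_of_lt hsT⟩ (le_refl s), hsum]

lemma bel_causal (S : Sys) (Ψ : S.LPolicy) (hC : S.LCausal Ψ) (P : Finset (Fin S.M))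
    (hP : ∀ j ∈ P, S.Nbr j ⊆ P) (t : ℕ) (ξ ξ' : S.NoiseAll)
    (hag : ∀ j ∈ P, ∀ τ : Fin S.T, (τ : ℕ) < t → ξ j τ = ξ' j τ) :
    ∀ s, s ≤ t → ∀ j ∈ P, bel S Ψ ξ s j = bel S Ψ ξ' s j := by
  intro s
  induction s with
  | zero => intro _ j _; rfl
  | succ s ih =>
    intro hst j hj
    have hs' : s ≤ t := le_of_lt hst
    funext τ
    simp only [bel]
    by_cases h : τ.val = s + 1 ∧ s < S.T
    · rw [dif_pos h, dif_pos h]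
      have hξs : ξ j ⟨s, h.2⟩ = ξ' j ⟨s, h.2⟩ := hag j hj ⟨s, h.2⟩ (by exact hst)
      have hΨ : Ψ j ⟨s, h.2⟩ (ξ j) (bel S Ψ ξ s) = Ψ j ⟨s, h.2⟩ (ξ' j) (bel S Ψ ξ' s) := by
        refine hC j ⟨s, h.2⟩ (ξ j) (ξ' j) _ _ ?_ ?_
        · intro τ' hτ'
          have h2 : (τ' : ℕ) < s := hτ'
          exact hag j hj τ' (by omega)
        · intro k hk τ' _
          rw [ih hs' k (hP j hj hk)]
      rw [hΨ, hξs, ih hs' j hj]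
      congr 3
      exact Finset.sum_congr rfl fun k hk => by rw [ih hs' k (hP j hj hk)]
    · rw [dif_neg h, dif_neg h]
      rw [ih hs' j hj]

lemma nbar_trans (S : Sys) : ∀ i, ∀ j ∈ S.Nbar i, S.Nbar j ⊆ S.Nbar i := by
  classical
  intro i
  have key := S.Nbar_min (fun i => (S.Nbar i).filter (fun j => S.Nbar j ⊆ S.Nbar i))
    (fun i => Finset.mem_filter.mpr ⟨S.Nbar_self i, le_refl _⟩)
    (by
      intro a b hb k hk
      rw [Finset.mem_filter] at hk ⊢
      exact ⟨S.Nbar_nested a b hb hk.1, le_trans hk.2 (S.Nbar_nested a b hb)⟩)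
  intro j hj
  exact (Finset.mem_filter.mp (key i hj)).2

lemma nbar_closed (S : Sys) : ∀ i, ∀ j ∈ S.Nbar i, S.Nbr j ⊆ S.Nbar i := by
  intro i j hj k hk
  exact nbar_trans S i j hj (S.Nbar_nested j k hk (S.Nbar_self k))

lemma lift_PNCausal (S : Sys) (Ψ : S.LPolicy) (hC : S.LCausal Ψ) :
    S.PNCausal (liftPolicy S Ψ) := by
  intro i t ξ ξ' hag
  simp only [liftPolicy]
  refine hC i t (ξ i) (ξ' i) _ _ ?_ ?_
  · intro τ hτ
    exact hag i (S.Nbar_self i) τ hτ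
  · intro k hk τ _
    have hk' : k ∈ S.Nbar i := S.Nbar_nested i k hk (S.Nbar_self k)
    rw [bel_causal S Ψ hC (S.Nbar i) (nbar_closed S i) t.val ξ ξ' hag t.val (le_refl _) k hk']

lemma clState_eq (S : Sys) (Ψ : S.LPolicy) (hC : S.LCausal Ψ) (ξ : S.NoiseAll) (i : Fin S.M) :
    S.clState (liftPolicy S Ψ) ξ i = fun τ => bel S Ψ ξ S.T i τ := by
  funext τ
  have hτ : τ.val ≤ S.T := Nat.lt_succ_iff.mp τ.isLt
  show S.jointAux (fun i' t => Ψ i' t (ξ i') (bel S Ψ ξ t.val)) ξ τ.val i = _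
  rw [jointAux_eq_bel S Ψ ξ τ.val hτ i,
    ← bel_stable S Ψ ξ hτ i ⟨τ.val, Nat.lt_succ_of_le hτ⟩ (le_refl _)]

lemma clInput_eq (S : Sys) (Ψ : S.LPolicy) (hC : S.LCausal Ψ) (ξ : S.NoiseAll) (i : Fin S.M) :
    S.clInput (liftPolicy S Ψ) ξ i = S.lInput Ψ i (ξ i) (bel S Ψ ξ S.T) := by
  funext t
  show Ψ i t (ξ i) (bel S Ψ ξ t.val) = Ψ i t (ξ i) (bel S Ψ ξ S.T)
  refine hC i t (ξ i) (ξ i) _ _ (fun τ _ => rfl) ?_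
  intro k _ τ hτ
  exact (bel_stable S Ψ ξ (le_of_lt t.isLt) k τ hτ).symm

lemma lState_eq (S : Sys) (Ψ : S.LPolicy) (hC : S.LCausal Ψ) (ξ : S.NoiseAll) (i : Fin S.M) :
    S.lState Ψ i (ξ i) (bel S Ψ ξ S.T) = fun τ => bel S Ψ ξ S.T i τ := by
  funext τ
  have hτ : τ.val ≤ S.T := Nat.lt_succ_iff.mp τ.isLt
  show S.trajAux i (bel S Ψ ξ S.T) (fun τ' => Ψ i τ' (ξ i) (bel S Ψ ξ S.T)) (ξ i) τ.val = _
  rw [trajAux_eq_bel S Ψ hC ξ i (bel S Ψ ξ S.T) S.T (fun _ _ _ => rfl) τ.val hτ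
    (le_trans hτ (Nat.le_succ _))]

/-- For feasible `(Ψ, X)`, the simulated joint states lie in the sets `X`. -/
lemma bel_mem_X (S : Sys) (Ψ : S.LPolicy) (X : ∀ i : Fin S.M, Set (S.StateTraj i))
    (hF : S.feasL Ψ X) (ξ : S.NoiseAll) (hξ : ξ ∈ S.XiM) :
    ∀ j, (fun τ => bel S Ψ ξ S.T j τ) ∈ X j := by
  obtain ⟨hC, hX, hcon⟩ := hF
  have claim : ∀ t, t ≤ S.T → ∃ η : ∀ j, S.StateTraj j, (∀ j, η j ∈ X j) ∧
      ∀ j (τ : Fin (S.T+1)), τ.val ≤ t → η j τ = bel S Ψ ξ S.T j τ := by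
    intro t
    induction t with
    | zero =>
      intro _
      choose ζ0 hζ0 using fun j => (hX j).1
      refine ⟨fun j => S.lState Ψ j (ξ j) ζ0, fun j =>
        (hcon j ζ0 (fun k _ => hζ0 k) (ξ j) (hξ j)).2, ?_⟩
      intro j τ hτ
      have h0 : (τ : ℕ) = 0 := Nat.le_zero.mp hτ
      have hτ0 : τ = ⟨0, Nat.succ_pos _⟩ := Fin.ext h0
      subst hτ0
      rw [bel_zero' S Ψ ξ S.T j _ rfl]; rfl
    | succ t ih =>
      intro ht
      obtain ⟨η, hηX, hηag⟩ := ih (le_of_lt ht)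
      refine ⟨fun j => S.lState Ψ j (ξ j) (fun k => η k), fun j =>
        (hcon j (fun k => η k) (fun k _ => hηX k) (ξ j) (hξ j)).2, ?_⟩
      intro j τ hτ
      have hτT : τ.val ≤ S.T := Nat.lt_succ_iff.mp τ.isLt
      show S.trajAux j (fun k => η k) (fun τ' => Ψ j τ' (ξ j) (fun k => η k)) (ξ j) τ.val = _
      rw [trajAux_eq_bel S Ψ hC ξ j (fun k => η k) t hηag τ.val hτT hτ]
  obtain ⟨η, hηX, hηag⟩ := claim S.T (le_refl _)
  intro j
  have : (fun τ => bel S Ψ ξ S.T j τ) = η j := by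
    funext τ
    exact (hηag j τ (Nat.lt_succ_iff.mp τ.isLt)).symm
  rw [this]
  exact hηX j

end Sys


/-- The local problem is a conservative approximation of the
partially nested problem in terms of optimal values: `val(P_L) ≥ val(P_PN)` (for any
selection `ξ0 ∈ Ξ_M` used to encode the restricted suprema of `P_PN`). -/
theorem valL_ge_valPN (S : Sys) (ξ0 : S.NoiseAll) (hξ0 : ξ0 ∈ S.XiM) :
    S.valPN ξ0 ≤ S.valL := by
  refine le_sInf ?_
  rintro v ⟨Ψ, X, hF, rfl⟩
  have hC := hF.1
  have hfeas : S.feasPN (Sys.liftPolicy S Ψ) := by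
    refine ⟨Sys.lift_PNCausal S Ψ hC, ?_⟩
    intro ξ hξ i
    have h1 := (hF.2.2 i (Sys.bel S Ψ ξ S.T)
      (fun k _ => Sys.bel_mem_X S Ψ X hF ξ hξ k) (ξ i) (hξ i)).1
    rw [Sys.clState_eq S Ψ hC ξ i, Sys.clInput_eq S Ψ hC ξ i, ← Sys.lState_eq S Ψ hC ξ i]
    exact h1
  refine le_trans (sInf_le ⟨Sys.liftPolicy S Ψ, hfeas, rfl⟩) ?_
  unfold Sys.objPN Sys.objL
  refine Finset.sum_le_sum ?_
  intro i _
  refine sSup_le_sSup ?_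
  rintro w ⟨ξ, ⟨hξM, -⟩, rfl⟩
  refine ⟨(ξ i, Sys.bel S Ψ ξ S.T), ⟨hξM i, fun k _ => Sys.bel_mem_X S Ψ X hF ξ hξM k⟩, ?_⟩
  simp only
  rw [Sys.clState_eq S Ψ hC ξ i, Sys.clInput_eq S Ψ hC ξ i, Sys.lState_eq S Ψ hC ξ i]
end

section
/- The local problem is a conservative approximation of the centralized problem in terms of optimal values: val(P_L) ≥ val(P_C). -/
open scoped BigOperators

namespace ValProof

variable (S : Sys)

/-- One step of the belief-update map: each agent's state trajectory under the
local policy, driven by the current beliefs. -/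
noncomputable def Fm (Ψ : S.LPolicy) (ξ : S.NoiseAll) (ζ : S.Beliefs) : S.Beliefs :=
  fun j => S.lState Ψ j (ξ j) ζ

lemma keyStep (Ψ : S.LPolicy) (hΨ : S.LCausal Ψ) (ξ ξ' : S.NoiseAll) (ζ ζ' : S.Beliefs)
    (m n : ℕ)
    (hζ : ∀ j (τ : Fin (S.T+1)), (τ:ℕ) < m → ζ j τ = ζ' j τ)
    (hξ : ∀ j (τ : Fin S.T), (τ:ℕ) < n → ξ j τ = ξ' j τ) :
    ∀ (j : Fin S.M) (τ : Fin (S.T+1)), (τ:ℕ) < min (m+1) (n+1) →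
      Fm S Ψ ξ ζ j τ = Fm S Ψ ξ' ζ' j τ := by
  have main : ∀ s, s < min (m+1) (n+1) → ∀ j,
      S.trajAux j ζ (S.lInput Ψ j (ξ j) ζ) (ξ j) s
        = S.trajAux j ζ' (S.lInput Ψ j (ξ' j) ζ') (ξ' j) s := by
    intro s
    induction s with
    | zero => intro _ j; rfl
    | succ s ih =>
      intro hs j
      have hsm : s < m := by omega
      have hsn : s < n := by omega
      have hs' : s < min (m+1) (n+1) := by omega
      by_cases h : s < S.T
      · have hu : S.lInput Ψ j (ξ j) ζ ⟨s, h⟩ = S.lInput Ψ j (ξ' j) ζ' ⟨s, h⟩ := by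
          show Ψ j ⟨s,h⟩ (ξ j) ζ = Ψ j ⟨s,h⟩ (ξ' j) ζ'
          exact hΨ j ⟨s,h⟩ _ _ _ _
            (fun τ hτ => hξ j τ (by simp at hτ; omega))
            (fun j' _ τ hτ => hζ j' τ (by simp at hτ; omega))
        have hsum : (∑ j' ∈ S.Nbr j, (S.B j ⟨s,h⟩ j').mulVec (ζ j' ⟨s, Nat.lt_succ_of_lt h⟩))
            = ∑ j' ∈ S.Nbr j, (S.B j ⟨s,h⟩ j').mulVec (ζ' j' ⟨s, Nat.lt_succ_of_lt h⟩) :=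
          Finset.sum_congr rfl fun j' _ => by
            rw [hζ j' ⟨s, Nat.lt_succ_of_lt h⟩ hsm]
        simp only [Sys.trajAux, dif_pos h]
        rw [ih hs' j, hu, hξ j ⟨s,h⟩ hsn, hsum]
      · simp only [Sys.trajAux, dif_neg h]
  intro j τ hτ
  exact main τ.val hτ j

lemma fpAgree (Ψ : S.LPolicy) (hΨ : S.LCausal Ψ) (ξ : S.NoiseAll) (ζ0 : S.Beliefs) :
    ∀ k, ∀ (j : Fin S.M) (τ : Fin (S.T+1)), (τ:ℕ) < k →
      (Fm S Ψ ξ)^[k+1] ζ0 j τ = (Fm S Ψ ξ)^[k] ζ0 j τ := by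
  intro k
  induction k with
  | zero => intro j τ h; omega
  | succ k ih =>
    intro j τ hτ
    rw [Function.iterate_succ_apply' (Fm S Ψ ξ) (k+1) ζ0]
    conv_rhs => rw [Function.iterate_succ_apply']
    exact keyStep S Ψ hΨ ξ ξ _ _ k (k+1) ih (fun _ _ _ => rfl) j τ (by omega)

lemma causalIter (Ψ : S.LPolicy) (hΨ : S.LCausal Ψ) (ξ ξ' : S.NoiseAll) (ζ0 : S.Beliefs)
    (n : ℕ) (hξ : ∀ j (τ : Fin S.T), (τ:ℕ) < n → ξ j τ = ξ' j τ) :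
    ∀ k (j : Fin S.M) (τ : Fin (S.T+1)), (τ:ℕ) < min (k+1) (n+1) →
      (Fm S Ψ ξ)^[k] ζ0 j τ = (Fm S Ψ ξ')^[k] ζ0 j τ := by
  intro k
  induction k with
  | zero => intro j τ _; rfl
  | succ k ih =>
    intro j τ hτ
    rw [Function.iterate_succ_apply', Function.iterate_succ_apply']
    exact keyStep S Ψ hΨ ξ ξ' _ _ (min (k+1) (n+1)) n ih hξ j τ (by omega)

lemma memIter (Ψ : S.LPolicy) (X : ∀ i : Fin S.M, Set (S.StateTraj i))
    (hcon : S.feasLcon Ψ X) (ζ0 : S.Beliefs) (hζ0 : ∀ j, ζ0 j ∈ X j)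
    (ξ : S.NoiseAll) (hξ : ξ ∈ S.XiM) :
    ∀ k j, (Fm S Ψ ξ)^[k] ζ0 j ∈ X j := by
  intro k
  induction k with
  | zero => exact hζ0
  | succ k ih =>
    intro j
    rw [Function.iterate_succ_apply']
    exact (hcon j _ (fun j' _ => ih j') (ξ j) (hξ j)).2

lemma jointEq (Ψ : S.LPolicy) (ξ : S.NoiseAll) (ζ : S.Beliefs)
    (hfix : Fm S Ψ ξ ζ = ζ) :
    ∀ s (hs : s ≤ S.T) (i : Fin S.M),
      S.jointAux (fun i' t => Ψ i' t (ξ i') ζ) ξ s i = ζ i ⟨s, by omega⟩ := by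
  have key : ∀ (i : Fin S.M) (τ : Fin (S.T+1)),
      ζ i τ = S.trajAux i ζ (S.lInput Ψ i (ξ i) ζ) (ξ i) τ.val := by
    intro i τ
    conv_lhs => rw [← hfix]
    rfl
  intro s
  induction s with
  | zero =>
    intro hs i
    rw [key i ⟨0, by omega⟩]
    rfl
  | succ s ih =>
    intro hs i
    have h : s < S.T := hs
    rw [key i ⟨s+1, by omega⟩]
    show S.jointAux _ ξ (s+1) i = _
    simp only [Sys.jointAux, Sys.trajAux, dif_pos h]
    have hA : S.jointAux (fun i' t => Ψ i' t (ξ i') ζ) ξ s i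
        = S.trajAux i ζ (S.lInput Ψ i (ξ i) ζ) (ξ i) s := by
      rw [ih (by omega) i]; exact key i ⟨s, by omega⟩
    have hsum : (∑ j ∈ S.Nbr i, (S.B i ⟨s,h⟩ j).mulVec
          (S.jointAux (fun i' t => Ψ i' t (ξ i') ζ) ξ s j))
        = ∑ j ∈ S.Nbr i, (S.B i ⟨s,h⟩ j).mulVec (ζ j ⟨s, Nat.lt_succ_of_lt h⟩) :=
      Finset.sum_congr rfl fun j _ => by rw [ih (by omega) j]
    rw [hA, hsum]
    rfl

end ValProof

/-- The local problem is a conservative approximation of the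
centralized problem in terms of optimal values: `val(P_L) ≥ val(P_C)`. -/
theorem valL_ge_valC (S : Sys) : S.valC ≤ S.valL := by
  rw [Sys.valL]
  apply le_sInf
  rintro v ⟨Ψ, X, ⟨hΨ, hX, hcon⟩, rfl⟩
  classical
  set ζ0 : S.Beliefs := fun j => ((hX j).1).some with hζ0def
  have hζ0 : ∀ j, ζ0 j ∈ X j := fun j => ((hX j).1).some_mem
  set ζs : S.NoiseAll → S.Beliefs := fun ξ => (ValProof.Fm S Ψ ξ)^[S.T+1] ζ0 with hζsdef
  have hfix : ∀ ξ, ValProof.Fm S Ψ ξ (ζs ξ) = ζs ξ := by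
    intro ξ
    funext j τ
    have h1 : ValProof.Fm S Ψ ξ (ζs ξ) j τ = (ValProof.Fm S Ψ ξ)^[S.T+1+1] ζ0 j τ := by
      rw [Function.iterate_succ_apply']
    rw [h1]
    exact ValProof.fpAgree S Ψ hΨ ξ ζ0 (S.T+1) j τ τ.isLt
  have hmem : ∀ ξ ∈ S.XiM, ∀ j, ζs ξ j ∈ X j :=
    fun ξ hξ j => ValProof.memIter S Ψ X hcon ζ0 hζ0 ξ hξ (S.T+1) j
  set Φ : S.CPolicy := fun i t ξ => Ψ i t (ξ i) (ζs ξ) with hΦdef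
  have hinput : ∀ ξ i, S.clInput Φ ξ i = S.lInput Ψ i (ξ i) (ζs ξ) := fun ξ i => rfl
  have hstate : ∀ ξ i, S.clState Φ ξ i = S.lState Ψ i (ξ i) (ζs ξ) := by
    intro ξ i
    funext τ
    have hj := ValProof.jointEq S Ψ ξ (ζs ξ) (hfix ξ) τ.val (by omega) i
    have h2 : S.lState Ψ i (ξ i) (ζs ξ) τ = ζs ξ i τ := congrFun (congrFun (hfix ξ) i) τ
    rw [h2]
    exact hj
  have hfeasC : S.feasC Φ := by
    constructor
    · intro i t ξ ξ' hag
      show Ψ i t (ξ i) (ζs ξ) = Ψ i t (ξ' i) (ζs ξ')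
      refine hΨ i t _ _ _ _ (fun τ hτ => hag i τ hτ) ?_
      intro j _ τ hτ
      refine ValProof.causalIter S Ψ hΨ ξ ξ' ζ0 t.val
        (fun j' τ' h => hag j' τ' h) (S.T+1) j τ ?_
      have := t.isLt
      omega
    · intro ξ hξ i
      rw [hstate ξ i, hinput ξ i]
      exact (hcon i (ζs ξ) (fun j _ => hmem ξ hξ j) (ξ i) (hξ i)).1
  have hobj : S.objC Φ ≤ S.objL Ψ X := by
    unfold Sys.objC Sys.objL
    refine Finset.sum_le_sum fun i _ => sSup_le_sSup ?_
    rintro v ⟨ξ, hξ, rfl⟩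
    exact ⟨(ξ i, ζs ξ), ⟨hξ i, fun j _ => hmem ξ hξ j⟩,
      by simp only [hstate, hinput]⟩
  exact le_trans (sInf_le ⟨Φ, hfeasC, rfl⟩) hobj
end

section
/- Let ((Γ_i)_i,(Y_i,z_i)_i) be a feasible solution of the auxiliary-uncertainty problem P_S, and for each j define the stagewise map L_j(ζ_j) := Y_j^{−1}(ζ_j − z_j) on X_j(Y_j,z_j) (the inverse exists since the stage blocks Y_{j,t} are positive definite). Then the solution ((Ψ_i)_i,(Y_i,z_i)_i) defined by Ψ_{i,t}(ξ_i^{t−1}, ζ_{N_i}^t) := Γ_{i,t}(ξ_i^{t−1}, [L_j(ζ_j)^t]_{j∈N_i}) is feasible for the affinely restricted problem P_AT and attains the same objective value: Σ_{i=1}^M sup_{ξ_i∈Ξ_i, ζ_{N_i}∈∏_{j∈N_i}X_j(Y_j,z_j)} J_i equals Σ_{i=1}^M sup_{ξ_i∈Ξ_i, s_{N_i}∈S_{N_i}} J_i for the original solution. -/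
open scoped BigOperators

namespace Sys

variable (S : Sys)

/-- The fixed primitive set `S_i = {s : g_i − G_i s ∈ K_i}` (as a set of state
trajectories of agent `i`). -/
def SsetOf (ℓ : Fin S.M → ℕ) (K : ∀ i : Fin S.M, Set (Fin (ℓ i) → ℝ))
    (G : ∀ i : Fin S.M, Matrix (Fin (ℓ i)) (Fin (S.T+1) × Fin (S.nx i)) ℝ)
    (g : ∀ i : Fin S.M, Fin (ℓ i) → ℝ) (i : Fin S.M) : Set (S.StateTraj i) :=
  {s | (fun r => g i r - ∑ p : Fin (S.T+1) × Fin (S.nx i), G i r p * s p.1 p.2) ∈ K i}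

/-- The affinely transformed state-forecast set
`X_i(Y_i, z_i) = {Y_i s + z_i : s ∈ S_i}` with block-diagonal (stagewise) `Y_i`. -/
def XAT (ℓ : Fin S.M → ℕ) (K : ∀ i : Fin S.M, Set (Fin (ℓ i) → ℝ))
    (G : ∀ i : Fin S.M, Matrix (Fin (ℓ i)) (Fin (S.T+1) × Fin (S.nx i)) ℝ)
    (g : ∀ i : Fin S.M, Fin (ℓ i) → ℝ)
    (Y : ∀ i : Fin S.M, Fin (S.T+1) → Matrix (Fin (S.nx i)) (Fin (S.nx i)) ℝ)
    (z : ∀ i : Fin S.M, S.StateTraj i) (i : Fin S.M) : Set (S.StateTraj i) :=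
  {x | ∃ s ∈ S.SsetOf ℓ K G g i, ∀ t, x t = (Y i t).mulVec (s t) + z i t}

/-- Feasibility for the affinely restricted problem `P_AT`: causal local policies,
positive definite stage blocks `Y_{i,t}`, and the robust constraints of `P_L` with the
state-forecast sets `X_i(Y_i, z_i)`. -/
def feasAT (ℓ : Fin S.M → ℕ) (K : ∀ i : Fin S.M, Set (Fin (ℓ i) → ℝ))
    (G : ∀ i : Fin S.M, Matrix (Fin (ℓ i)) (Fin (S.T+1) × Fin (S.nx i)) ℝ)
    (g : ∀ i : Fin S.M, Fin (ℓ i) → ℝ)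
    (Y : ∀ i : Fin S.M, Fin (S.T+1) → Matrix (Fin (S.nx i)) (Fin (S.nx i)) ℝ)
    (z : ∀ i : Fin S.M, S.StateTraj i) (Ψ : S.LPolicy) : Prop :=
  S.LCausal Ψ ∧ (∀ i t, (Y i t).PosDef) ∧ S.feasLcon Ψ (fun i => S.XAT ℓ K G g Y z i)

/-- Optimal value of `P_AT`. -/
noncomputable def valAT (ℓ : Fin S.M → ℕ) (K : ∀ i : Fin S.M, Set (Fin (ℓ i) → ℝ))
    (G : ∀ i : Fin S.M, Matrix (Fin (ℓ i)) (Fin (S.T+1) × Fin (S.nx i)) ℝ)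
    (g : ∀ i : Fin S.M, Fin (ℓ i) → ℝ) : EReal :=
  sInf {v : EReal | ∃ (Ψ : S.LPolicy)
    (Y : ∀ i : Fin S.M, Fin (S.T+1) → Matrix (Fin (S.nx i)) (Fin (S.nx i)) ℝ)
    (z : ∀ i : Fin S.M, S.StateTraj i),
    S.feasAT ℓ K G g Y z Ψ ∧ v = S.objL Ψ (fun i => S.XAT ℓ K G g Y z i)}

/-- The stagewise affine map `R_j(s_j) = Y_j s_j + z_j`. -/
noncomputable def Rmap (Y : ∀ i : Fin S.M, Fin (S.T+1) → Matrix (Fin (S.nx i)) (Fin (S.nx i)) ℝ)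
    (z : ∀ i : Fin S.M, S.StateTraj i) (j : Fin S.M) (s : S.StateTraj j) : S.StateTraj j :=
  fun t => (Y j t).mulVec (s t) + z j t

/-- The stagewise inverse map `L_j(ζ_j) = Y_j⁻¹ (ζ_j − z_j)`. -/
noncomputable def Lmap (Y : ∀ i : Fin S.M, Fin (S.T+1) → Matrix (Fin (S.nx i)) (Fin (S.nx i)) ℝ)
    (z : ∀ i : Fin S.M, S.StateTraj i) (j : Fin S.M) (ζ : S.StateTraj j) : S.StateTraj j :=
  fun t => (Y j t)⁻¹.mulVec (ζ t - z j t)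

/-- The auxiliary-uncertainty constraint set `S_{N_i} = ∏_{j ∈ N_i} S_j`. -/
def SBelSet (ℓ : Fin S.M → ℕ) (K : ∀ i : Fin S.M, Set (Fin (ℓ i) → ℝ))
    (G : ∀ i : Fin S.M, Matrix (Fin (ℓ i)) (Fin (S.T+1) × Fin (S.nx i)) ℝ)
    (g : ∀ i : Fin S.M, Fin (ℓ i) → ℝ) (i : Fin S.M) : Set S.Beliefs :=
  {s | ∀ j ∈ S.Nbr i, s j ∈ S.SsetOf ℓ K G g j}

/-- Closed-loop state in the auxiliary-uncertainty problem `P_S`: the beliefs are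
`ζ_j = Y_j s_j + z_j` and the inputs are `Γ_{i,t}(ξ_i^{t-1}, s_{N_i}^t)`. -/
noncomputable def psState
    (Y : ∀ i : Fin S.M, Fin (S.T+1) → Matrix (Fin (S.nx i)) (Fin (S.nx i)) ℝ)
    (z : ∀ i : Fin S.M, S.StateTraj i) (Γ : S.LPolicy) (i : Fin S.M)
    (ξ : S.NoiseTraj i) (s : S.Beliefs) : S.StateTraj i :=
  S.traj i (fun j => S.Rmap Y z j (s j)) (fun t => Γ i t ξ s) ξ

/-- Feasibility for the auxiliary-uncertainty problem `P_S`. -/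
def feasPS (ℓ : Fin S.M → ℕ) (K : ∀ i : Fin S.M, Set (Fin (ℓ i) → ℝ))
    (G : ∀ i : Fin S.M, Matrix (Fin (ℓ i)) (Fin (S.T+1) × Fin (S.nx i)) ℝ)
    (g : ∀ i : Fin S.M, Fin (ℓ i) → ℝ)
    (Y : ∀ i : Fin S.M, Fin (S.T+1) → Matrix (Fin (S.nx i)) (Fin (S.nx i)) ℝ)
    (z : ∀ i : Fin S.M, S.StateTraj i) (Γ : S.LPolicy) : Prop :=
  S.LCausal Γ ∧ (∀ i t, (Y i t).PosDef) ∧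
  ∀ i, ∀ s ∈ S.SBelSet ℓ K G g i, ∀ ξ ∈ S.Xi i,
    S.InO i (S.psState Y z Γ i ξ s) (fun t => Γ i t ξ s) ∧
    S.psState Y z Γ i ξ s ∈ S.XAT ℓ K G g Y z i

/-- Objective of `P_S`: `∑_i sup_{ξ_i ∈ Ξ_i, s_{N_i} ∈ S_{N_i}} J_i`. -/
noncomputable def objPS (ℓ : Fin S.M → ℕ) (K : ∀ i : Fin S.M, Set (Fin (ℓ i) → ℝ))
    (G : ∀ i : Fin S.M, Matrix (Fin (ℓ i)) (Fin (S.T+1) × Fin (S.nx i)) ℝ)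
    (g : ∀ i : Fin S.M, Fin (ℓ i) → ℝ)
    (Y : ∀ i : Fin S.M, Fin (S.T+1) → Matrix (Fin (S.nx i)) (Fin (S.nx i)) ℝ)
    (z : ∀ i : Fin S.M, S.StateTraj i) (Γ : S.LPolicy) : EReal :=
  ∑ i : Fin S.M,
    sSup ((fun p : S.NoiseTraj i × S.Beliefs =>
        ((S.cost i (S.psState Y z Γ i p.1 p.2) (fun t => Γ i t p.1 p.2) : ℝ) : EReal)) ''
      {p | p.1 ∈ S.Xi i ∧ p.2 ∈ S.SBelSet ℓ K G g i})

/-- Optimal value of `P_S`. -/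
noncomputable def valPS (ℓ : Fin S.M → ℕ) (K : ∀ i : Fin S.M, Set (Fin (ℓ i) → ℝ))
    (G : ∀ i : Fin S.M, Matrix (Fin (ℓ i)) (Fin (S.T+1) × Fin (S.nx i)) ℝ)
    (g : ∀ i : Fin S.M, Fin (ℓ i) → ℝ) : EReal :=
  sInf {v : EReal | ∃ (Γ : S.LPolicy)
    (Y : ∀ i : Fin S.M, Fin (S.T+1) → Matrix (Fin (S.nx i)) (Fin (S.nx i)) ℝ)
    (z : ∀ i : Fin S.M, S.StateTraj i),
    S.feasPS ℓ K G g Y z Γ ∧ v = S.objPS ℓ K G g Y z Γ}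

end Sys


section Aux
variable {S : Sys}

lemma Rmap_Lmap (Y : ∀ i : Fin S.M, Fin (S.T+1) → Matrix (Fin (S.nx i)) (Fin (S.nx i)) ℝ)
    (z : ∀ i : Fin S.M, S.StateTraj i) (hY : ∀ i t, (Y i t).PosDef)
    (j : Fin S.M) (ζ : S.StateTraj j) : S.Rmap Y z j (S.Lmap Y z j ζ) = ζ := by
  funext t
  simp only [Sys.Rmap, Sys.Lmap, Matrix.mulVec_mulVec,
    Matrix.mul_nonsing_inv _ ((hY j t).isUnit.map (Matrix.detMonoidHom)), Matrix.one_mulVec]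
  abel

lemma Lmap_Rmap (Y : ∀ i : Fin S.M, Fin (S.T+1) → Matrix (Fin (S.nx i)) (Fin (S.nx i)) ℝ)
    (z : ∀ i : Fin S.M, S.StateTraj i) (hY : ∀ i t, (Y i t).PosDef)
    (j : Fin S.M) (s : S.StateTraj j) : S.Lmap Y z j (S.Rmap Y z j s) = s := by
  funext t
  simp only [Sys.Lmap, Sys.Rmap, add_sub_cancel_right, Matrix.mulVec_mulVec,
    Matrix.nonsing_inv_mul _ ((hY j t).isUnit.map (Matrix.detMonoidHom)), Matrix.one_mulVec]

end Aux

/-- Let `((Γ_i)_i, (Y_i, z_i)_i)` be a feasible solution of the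
auxiliary-uncertainty problem `P_S`, and for each `j` let `L_j(ζ_j) = Y_j⁻¹ (ζ_j − z_j)`
(stagewise; the inverse exists since the stage blocks are positive definite). Then the
solution `((Ψ_i)_i, (Y_i, z_i)_i)` with `Ψ_{i,t}(ξ_i^{t-1}, ζ_{N_i}^t) :=
Γ_{i,t}(ξ_i^{t-1}, [L_j(ζ_j)^t]_{j ∈ N_i})` is feasible for the affinely restricted
problem `P_AT` and attains the same objective value. -/
theorem auxUncertainty_to_affineRestriction (S : Sys)
    (ℓ : Fin S.M → ℕ) (K : ∀ i : Fin S.M, Set (Fin (ℓ i) → ℝ))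
    (hKclosed : ∀ i, IsClosed (K i)) (hKconvex : ∀ i, Convex ℝ (K i))
    (hKadd : ∀ i, ∀ a ∈ K i, ∀ b ∈ K i, a + b ∈ K i)
    (hKsmul : ∀ i, ∀ c : ℝ, 0 ≤ c → ∀ a ∈ K i, c • a ∈ K i)
    (G : ∀ i : Fin S.M, Matrix (Fin (ℓ i)) (Fin (S.T+1) × Fin (S.nx i)) ℝ)
    (g : ∀ i : Fin S.M, Fin (ℓ i) → ℝ)
    (hSne : ∀ i, (S.SsetOf ℓ K G g i).Nonempty)
    (hSconvex : ∀ i, Convex ℝ (S.SsetOf ℓ K G g i))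
    (hScompact : ∀ i, IsCompact (S.SsetOf ℓ K G g i))
    (Γ : S.LPolicy)
    (Y : ∀ i : Fin S.M, Fin (S.T+1) → Matrix (Fin (S.nx i)) (Fin (S.nx i)) ℝ)
    (z : ∀ i : Fin S.M, S.StateTraj i)
    (hfeas : S.feasPS ℓ K G g Y z Γ) :
    S.feasAT ℓ K G g Y z (fun i t ξ ζ => Γ i t ξ (fun j => S.Lmap Y z j (ζ j))) ∧
    S.objL (fun i t ξ ζ => Γ i t ξ (fun j => S.Lmap Y z j (ζ j)))
        (fun i => S.XAT ℓ K G g Y z i)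
      = S.objPS ℓ K G g Y z Γ := by
  obtain ⟨hΓ, hY, hcon⟩ := hfeas
  set Ψ : S.LPolicy := fun i t ξ ζ => Γ i t ξ (fun j => S.Lmap Y z j (ζ j)) with hΨ
  have hRL : ∀ (ζ : S.Beliefs), (fun j => S.Rmap Y z j (S.Lmap Y z j (ζ j))) = ζ :=
    fun ζ => funext fun j => Rmap_Lmap Y z hY j (ζ j)
  have hLR : ∀ (s : S.Beliefs), (fun j => S.Lmap Y z j (S.Rmap Y z j (s j))) = s :=
    fun s => funext fun j => Lmap_Rmap Y z hY j (s j)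
  have hBel2S : ∀ i (ζ : S.Beliefs), ζ ∈ S.BelSet (fun i => S.XAT ℓ K G g Y z i) i →
      (fun j => S.Lmap Y z j (ζ j)) ∈ S.SBelSet ℓ K G g i := by
    intro i ζ hζ j hj
    obtain ⟨s, hs, hst⟩ := hζ j hj
    have hz : ζ j = S.Rmap Y z j s := funext hst
    show S.Lmap Y z j (ζ j) ∈ S.SsetOf ℓ K G g j
    rw [hz, Lmap_Rmap Y z hY]
    exact hs
  have hS2Bel : ∀ i (s : S.Beliefs), s ∈ S.SBelSet ℓ K G g i →
      (fun j => S.Rmap Y z j (s j)) ∈ S.BelSet (fun i => S.XAT ℓ K G g Y z i) i :=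
    fun i s hs j hj => ⟨s j, hs j hj, fun t => rfl⟩
  have hst : ∀ i (ξ : S.NoiseTraj i) (ζ : S.Beliefs),
      S.lState Ψ i ξ ζ = S.psState Y z Γ i ξ (fun j => S.Lmap Y z j (ζ j)) := by
    intro i ξ ζ
    unfold Sys.lState Sys.psState
    rw [hRL ζ]
    rfl
  have hst' : ∀ i (ξ : S.NoiseTraj i) (s : S.Beliefs),
      S.lState Ψ i ξ (fun j => S.Rmap Y z j (s j)) = S.psState Y z Γ i ξ s := by
    intro i ξ s
    rw [hst i ξ _, hLR s]
  have hin' : ∀ i (ξ : S.NoiseTraj i) (s : S.Beliefs),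
      S.lInput Ψ i ξ (fun j => S.Rmap Y z j (s j)) = fun t => Γ i t ξ s := by
    intro i ξ s
    funext t
    show Γ i t ξ (fun j => S.Lmap Y z j (S.Rmap Y z j (s j))) = _
    rw [hLR s]
  constructor
  · refine ⟨?_, hY, ?_⟩
    · intro i t ξ ξ' ζ ζ' hξ hζ
      refine hΓ i t ξ ξ' _ _ hξ ?_
      intro j hj τ hτ
      simp only [Sys.Lmap, hζ j hj τ hτ]
    · intro i ζ hζ ξ hξ
      have h := hcon i _ (hBel2S i ζ hζ) ξ hξ
      rw [show S.lInput Ψ i ξ ζ = fun t => Γ i t ξ (fun j => S.Lmap Y z j (ζ j)) from rfl,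
        hst i ξ ζ]
      exact h
  · unfold Sys.objL Sys.objPS
    refine Finset.sum_congr rfl fun i _ => ?_
    congr 1
    ext v
    constructor
    · rintro ⟨⟨ξ, ζ⟩, ⟨hξ, hζ⟩, rfl⟩
      refine ⟨(ξ, fun j => S.Lmap Y z j (ζ j)), ⟨hξ, hBel2S i ζ hζ⟩, ?_⟩
      simp only [hst i ξ ζ]
      rfl
    · rintro ⟨⟨ξ, s⟩, ⟨hξ, hs⟩, rfl⟩
      refine ⟨(ξ, fun j => S.Rmap Y z j (s j)), ⟨hξ, hS2Bel i s hs⟩, ?_⟩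
      simp only [hst' i ξ s, hin' i ξ s]
end

section
/- Let K ⊆ ℝ^m be a convex cone, G ∈ ℝ^{m×n}, g ∈ ℝ^m, and suppose that S = {s ∈ ℝ^n : g − G s ∈ K} is nonempty and bounded. For a scalar y ≥ 0 and z ∈ ℝ^n define X(y,z) = {x ∈ ℝ^n : ∃ s ∈ S, x = y·s + z} and X̂(y,z) = {x ∈ ℝ^n : ∃ ν ∈ ℝ^n, x = ν + z and y·g − G ν ∈ K}. Then X(y,z) = X̂(y,z) for every y ≥ 0 and z ∈ ℝ^n; equivalently, the sets {(x,y,z) : y ≥ 0, x ∈ X(y,z)} and {(x,y,z) : y ≥ 0, x ∈ X̂(y,z)} coincide. -/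
open scoped BigOperators

/-- Let `K ⊆ ℝ^m` be a convex cone (closed under addition and
multiplication by nonnegative scalars), `G ∈ ℝ^{m×n}`, `g ∈ ℝ^m`, and suppose
`S = {s : g − G s ∈ K}` is nonempty and bounded. For `y ≥ 0` and `z ∈ ℝ^n`, the set
`X(y,z) = {y·s + z : s ∈ S}` coincides with
`X̂(y,z) = {ν + z : y·g − G ν ∈ K}`. -/
theorem scaled_set_reformulation {m n : ℕ} (K : Set (Fin m → ℝ))
    (hKadd : ∀ a ∈ K, ∀ b ∈ K, a + b ∈ K)
    (hKsmul : ∀ c : ℝ, 0 ≤ c → ∀ a ∈ K, c • a ∈ K)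
    (G : Matrix (Fin m) (Fin n) ℝ) (g : Fin m → ℝ)
    (hne : {s : Fin n → ℝ | g - G.mulVec s ∈ K}.Nonempty)
    (hbdd : Bornology.IsBounded {s : Fin n → ℝ | g - G.mulVec s ∈ K}) :
    ∀ y : ℝ, 0 ≤ y → ∀ z : Fin n → ℝ,
      {x : Fin n → ℝ | ∃ s, g - G.mulVec s ∈ K ∧ x = y • s + z}
        = {x : Fin n → ℝ | ∃ ν : Fin n → ℝ, x = ν + z ∧ y • g - G.mulVec ν ∈ K} := by
  intro y hy z
  rcases eq_or_lt_of_le hy with hy0 | hypos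
  · -- y = 0
    subst hy0
    obtain ⟨s₀, hs₀⟩ := hne
    ext x
    simp only [Set.mem_setOf_eq, zero_smul, zero_add]
    constructor
    · rintro ⟨s, hs, rfl⟩
      refine ⟨0, by simp, ?_⟩
      have : (0 : ℝ) • (g - G.mulVec s₀) ∈ K := hKsmul 0 le_rfl _ hs₀
      simpa using this
    · rintro ⟨ν, rfl, hν⟩
      -- show ν = 0 using boundedness
      have hν' : -G.mulVec ν ∈ K := by simpa using hν
      have hray : ∀ t : ℝ, 0 ≤ t → s₀ + t • ν ∈ {s : Fin n → ℝ | g - G.mulVec s ∈ K} := by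
        intro t ht
        have h1 : t • (-G.mulVec ν) ∈ K := hKsmul t ht _ hν'
        have h2 := hKadd _ hs₀ _ h1
        have : g - G.mulVec (s₀ + t • ν) = (g - G.mulVec s₀) + t • (-G.mulVec ν) := by
          rw [Matrix.mulVec_add, Matrix.mulVec_smul]
          module
        simpa [this] using h2
      have hν0 : ν = 0 := by
        by_contra hνne
        obtain ⟨C, hC⟩ := hbdd.exists_norm_le
        have hνpos : 0 < ‖ν‖ := norm_pos_iff.mpr hνne
        set t : ℝ := (C + ‖s₀‖ + 1) / ‖ν‖ with ht
        have htpos : 0 ≤ t := by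
          apply div_nonneg _ hνpos.le
          have := hC s₀ hs₀
          have h0 : 0 ≤ ‖s₀‖ := norm_nonneg _
          linarith
        have hmem := hray t htpos
        have hle := hC _ hmem
        have h1 : ‖t • ν‖ ≤ ‖s₀ + t • ν‖ + ‖s₀‖ := by
          have := norm_sub_le (s₀ + t • ν) s₀
          simpa using this
        have h2 : ‖t • ν‖ = t * ‖ν‖ := by
          rw [norm_smul, Real.norm_of_nonneg htpos]
        have h3 : t * ‖ν‖ = C + ‖s₀‖ + 1 := div_mul_cancel₀ _ hνpos.ne'
        linarith
      subst hν0
      exact ⟨s₀, hs₀, by simp⟩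
  · -- y > 0
    ext x
    simp only [Set.mem_setOf_eq]
    constructor
    · rintro ⟨s, hs, rfl⟩
      refine ⟨y • s, rfl, ?_⟩
      have : y • (g - G.mulVec s) ∈ K := hKsmul y hy _ hs
      have heq : y • g - G.mulVec (y • s) = y • (g - G.mulVec s) := by
        rw [Matrix.mulVec_smul, smul_sub]
      rwa [heq]
    · rintro ⟨ν, rfl, hν⟩
      refine ⟨y⁻¹ • ν, ?_, ?_⟩
      · have : y⁻¹ • (y • g - G.mulVec ν) ∈ K := hKsmul _ (inv_nonneg.mpr hy) _ hν
        have heq : g - G.mulVec (y⁻¹ • ν) = y⁻¹ • (y • g - G.mulVec ν) := by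
          rw [Matrix.mulVec_smul, smul_sub, smul_smul, inv_mul_cancel₀ hypos.ne', one_smul]
        rwa [heq]
      · rw [smul_smul, mul_inv_cancel₀ hypos.ne', one_smul]
end
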